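/- arXiv:2502.06711 — 2 statements merged into one kernel-verified Lean document; each statement's English description precedes it below -/
import Mathlib

section
/- For every α ≥ 1/2 and integer p ≥ 1, there exists a constant C < ∞ (depending only on α and p) such that the following holds. Let A^(1) ∈ ℝ^{n₀×n₁}, …, A^(p) ∈ ℝ^{n_{p−1}×n_p} be independent families of i.i.d. centered random variables with finite moment of order 2α, and let P := A^(1) ⋯ A^(p) ∈ ℝ^{n₀×n_p}. Then for every i ∈ {1,…,n₀} and j ∈ {1,…,n_p}, E[|P_{ij}|^{2α}] ≤ C (n₁ ⋯ n_{p−1})^{max(α,1)} E[|A^(1)_{11}|^{2α}] ⋯ E[|A^(p)_{11}|^{2α}]. -/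
open MeasureTheory ProbabilityTheory Finset

/-- The product of the `p+1` matrices `A 0, A 1, ..., A p`, where `A q` is viewed as a matrix of
size `n q × n (q+1)`: `matProd n A p i k` is the `(i, k)` entry of this product. -/
noncomputable def matProd (n : ℕ → ℕ) (A : ℕ → ℕ → ℕ → ℝ) : ℕ → ℕ → ℕ → ℝ
  | 0 => A 0
  | p + 1 => fun i k => ∑ j ∈ Finset.range (n (p + 1)), matProd n A p i j * A (p + 1) j k

set_option linter.unusedSectionVars false

namespace ME
lemma rpow_subadd {t a b : ℝ} (ht0 : 0 ≤ t) (ht1 : t ≤ 1) (ha : 0 ≤ a) (hb : 0 ≤ b) :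
    (a + b) ^ t ≤ a ^ t + b ^ t := by
  have h := NNReal.rpow_add_le_add_rpow a.toNNReal b.toNNReal ht0 ht1
  have h2 := NNReal.coe_le_coe.2 h
  push_cast at h2
  rwa [Real.coe_toNNReal _ ha, Real.coe_toNNReal _ hb] at h2

lemma rpow_tangent_upper {s a w : ℝ} (hs : 1 ≤ s) (ha : 0 < a) (haw : 0 < a + w) :
    (a + w) ^ s ≤ a ^ s + s * w * (a + w) ^ (s - 1) := by
  have hkey : 1 + s * (-w / (a + w)) ≤ (1 + (-w / (a + w))) ^ s := by
    apply one_add_mul_self_le_rpow_one_add _ hs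
    rw [neg_div, neg_le, neg_neg, div_le_one haw]
    linarith
  have h1 : 1 + (-w / (a + w)) = a / (a + w) := by field_simp; ring
  rw [h1] at hkey
  have h2 : (a / (a + w)) ^ s = a ^ s / (a + w) ^ s := Real.div_rpow ha.le haw.le s
  rw [h2] at hkey
  have hpow : (0:ℝ) < (a + w) ^ s := Real.rpow_pos_of_pos haw _
  have h3 : (1 + s * (-w / (a + w))) * (a + w) ^ s ≤ a ^ s := by
    calc (1 + s * (-w / (a + w))) * (a + w) ^ s
        ≤ (a ^ s / (a + w) ^ s) * (a + w) ^ s :=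
          mul_le_mul_of_nonneg_right hkey hpow.le
      _ = a ^ s := by field_simp
  have h4 : (1 + s * (-w / (a + w))) * (a + w) ^ s
      = (a + w) ^ s - s * w * (a + w) ^ (s - 1) := by
    have h5 : (a + w) ^ (s - 1) = (a + w) ^ s / (a + w) := Real.rpow_sub_one haw.ne' s
    rw [h5]
    field_simp
    ring
  rw [h4] at h3
  linarith

/-- For `v ≥ 0` (or any `v`), `v^(r-1) * v = v^r` when `v ≥ 0`, `r ≥ 1`. -/
lemma rpow_pred_mul_self {v r : ℝ} (hv : 0 ≤ v) (hr : 1 ≤ r) :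
    v ^ (r - 1) * v = v ^ r := by
  rcases eq_or_lt_of_le hv with h | h
  · rw [← h, mul_zero, Real.zero_rpow (by linarith : (0:ℝ) < r).ne']
  · rw [Real.rpow_sub_one h.ne', div_mul_cancel₀]
    exact h.ne'

lemma case2_p1 {r u v : ℝ} (hr1 : 1 ≤ r) (hr2 : r ≤ 2) (hu : 0 < u) (hv : |v| < u) :
    (u + v) ^ r ≤ u ^ r + r * u ^ (r - 1) * v + 2 * |v| ^ r := by
  have habs := abs_lt.1 hv
  have huv : 0 < u + v := by linarith
  have hm := rpow_tangent_upper hr1 hu huv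
  rcases le_or_gt 0 v with hv0 | hv0
  · have hsub : (u + v) ^ (r - 1) ≤ u ^ (r - 1) + v ^ (r - 1) :=
      rpow_subadd (by linarith) (by linarith) hu.le hv0
    have h1 : r * v * (u + v) ^ (r - 1) ≤ r * v * (u ^ (r - 1) + v ^ (r - 1)) :=
      mul_le_mul_of_nonneg_left hsub (by positivity)
    have h2 : v ^ (r - 1) * v = v ^ r := rpow_pred_mul_self hv0 hr1
    have h3 : |v| ^ r = v ^ r := by rw [abs_of_nonneg hv0]
    have h4 : 0 ≤ v ^ r := Real.rpow_nonneg hv0 r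
    nlinarith [h1, hm]
  · have hvpos : (0:ℝ) < -v := by linarith
    have key : u ^ (r - 1) ≤ (u + v) ^ (r - 1) + (-v) ^ (r - 1) := by
      have := rpow_subadd (t := r - 1) (by linarith) (by linarith) huv.le hvpos.le
      calc u ^ (r-1) = ((u + v) + -v) ^ (r-1) := by ring_nf
        _ ≤ _ := this
    have h2 : (-v) ^ (r - 1) * (-v) = (-v) ^ r := rpow_pred_mul_self hvpos.le hr1
    have h3 : |v| ^ r = (-v) ^ r := by rw [abs_of_neg hv0]
    have h4 : 0 ≤ (-v) ^ r := Real.rpow_nonneg hvpos.le r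
    have h5 : r * (-v) * (u ^ (r-1) - (u+v) ^ (r-1)) ≤ r * (-v) * ((-v) ^ (r-1)) := by
      apply mul_le_mul_of_nonneg_left _ (by positivity)
      linarith
    nlinarith [hm]

lemma case2_p2 {r u v : ℝ} (hr2 : 2 ≤ r) (hu : 0 < u) (hv : |v| < u) :
    (u + v) ^ r ≤ u ^ r + r * u ^ (r - 1) * v + r * r * 2 ^ r * (u ^ (r - 2) * v ^ 2) := by
  have habs := abs_lt.1 hv
  have huv : 0 < u + v := by linarith
  have hm := rpow_tangent_upper (by linarith : (1:ℝ) ≤ r) hu huv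
  have h2r : (1:ℝ) ≤ 2 ^ r := Real.one_le_rpow (by norm_num) (by linarith)
  have hur2 : (0:ℝ) ≤ u ^ (r - 2) := Real.rpow_nonneg hu.le _
  rcases le_or_gt 0 v with hv0 | hv0
  · have hm2 : (u + v) ^ (r - 1) ≤ u ^ (r - 1) + (r - 1) * v * (u + v) ^ (r - 1 - 1) :=
      rpow_tangent_upper (by linarith) hu huv
    rw [show r - 1 - 1 = r - 2 by ring] at hm2
    have h3 : (u + v) ^ (r - 2) ≤ 2 ^ r * u ^ (r - 2) := by
      calc (u + v) ^ (r - 2) ≤ (2 * u) ^ (r - 2) := by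
            apply Real.rpow_le_rpow huv.le (by linarith) (by linarith)
        _ = 2 ^ (r - 2) * u ^ (r - 2) := Real.mul_rpow (by norm_num) hu.le
        _ ≤ 2 ^ r * u ^ (r - 2) := by
            apply mul_le_mul_of_nonneg_right _ hur2
            exact Real.rpow_le_rpow_of_exponent_le (by norm_num) (by linarith)
    have h4 : r * v * (u + v) ^ (r - 1)
        ≤ r * v * (u ^ (r - 1) + (r - 1) * v * (2 ^ r * u ^ (r - 2))) := by
      apply mul_le_mul_of_nonneg_left _ (mul_nonneg (by linarith) hv0)
      calc (u + v) ^ (r-1) ≤ u ^ (r-1) + (r-1) * v * (u+v) ^ (r-2) := hm2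
        _ ≤ _ := by
            have : (r-1) * v * (u+v) ^ (r-2) ≤ (r-1) * v * (2 ^ r * u ^ (r-2)) :=
              mul_le_mul_of_nonneg_left h3 (mul_nonneg (by linarith) hv0)
            linarith
    have h4' : r * v * (u ^ (r - 1) + (r - 1) * v * (2 ^ r * u ^ (r - 2)))
        = r * u ^ (r-1) * v + (r * (r-1)) * (2 ^ r * (u ^ (r-2) * v ^ 2)) := by ring
    have hnn : (0:ℝ) ≤ 2 ^ r * (u ^ (r-2) * v ^ 2) :=
      mul_nonneg (by positivity) (mul_nonneg hur2 (sq_nonneg v))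
    have h6 : (r * (r-1)) * (2 ^ r * (u ^ (r-2) * v ^ 2))
        ≤ (r * r) * (2 ^ r * (u ^ (r-2) * v ^ 2)) :=
      mul_le_mul_of_nonneg_right
        (mul_le_mul_of_nonneg_left (by linarith) (by linarith)) hnn
    have h7 : (r * r) * (2 ^ r * (u ^ (r-2) * v ^ 2))
        = r * r * 2 ^ r * (u ^ (r-2) * v ^ 2) := by ring
    rw [h4'] at h4
    linarith [hm, h4]
  · have hvpos : (0:ℝ) < -v := by linarith
    have key : u ^ (r - 1) ≤ (u + v) ^ (r - 1) + (r - 1) * (-v) * u ^ (r - 2) := by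
      have h := rpow_tangent_upper (s := r - 1) (a := u + v) (w := -v)
        (by linarith) huv (by linarith [add_neg_cancel_right u v])
      rw [show u + v + -v = u by ring, show r - 1 - 1 = r - 2 by ring] at h
      exact h
    have h5 : r * (-v) * (u ^ (r-1) - (u+v) ^ (r-1))
        ≤ r * (-v) * ((r - 1) * (-v) * u ^ (r - 2)) := by
      apply mul_le_mul_of_nonneg_left _ (mul_nonneg (by linarith) hvpos.le)
      linarith
    have h5' : r * -v * ((r - 1) * -v * u ^ (r - 2))
        = (r * (r-1)) * (u ^ (r-2) * v ^ 2) := by ring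
    have hnn : (0:ℝ) ≤ u ^ (r-2) * v ^ 2 := mul_nonneg hur2 (sq_nonneg v)
    have h6 : (r * (r-1)) * (u ^ (r-2) * v ^ 2)
        ≤ (r * r * 2 ^ r) * (u ^ (r-2) * v ^ 2) := by
      apply mul_le_mul_of_nonneg_right _ hnn
      have hA : r * (r-1) ≤ r * r :=
        mul_le_mul_of_nonneg_left (by linarith) (by linarith)
      have hB : r * r ≤ r * r * 2 ^ r := by
        nth_rewrite 1 [← mul_one (r*r)]
        exact mul_le_mul_of_nonneg_left h2r (by nlinarith)
      linarith
    rw [h5'] at h5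
    nlinarith [hm, h5, h6]


noncomputable def hfun (r x : ℝ) : ℝ := r * x * |x| ^ (r - 2)

lemma hfun_measurable (r : ℝ) : Measurable (hfun r) := by
  unfold hfun
  exact (measurable_id.const_mul r).mul (measurable_abs.pow_const _)

lemma abs_hfun_le {r : ℝ} (hr : 1 ≤ r) (x : ℝ) : |hfun r x| ≤ r * |x| ^ (r - 1) := by
  unfold hfun
  rcases eq_or_ne x 0 with rfl | hx
  · simp only [mul_zero, zero_mul, abs_zero]
    positivity
  · have h1 : |r * x * |x| ^ (r - 2)| = r * (|x| * |x| ^ (r - 2)) := by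
      rw [abs_mul, abs_mul, abs_of_nonneg (by linarith : (0:ℝ) ≤ r),
        abs_of_nonneg (Real.rpow_nonneg (abs_nonneg x) _)]
      ring
    rw [h1]
    have h2 : |x| * |x| ^ (r - 2) = |x| ^ (r - 1) := by
      nth_rewrite 1 [← Real.rpow_one |x|]
      rw [← Real.rpow_add (abs_pos.2 hx)]
      ring_nf
    rw [h2]

lemma decomp {r x y : ℝ} (hx : x ≠ 0) (h : |y| < |x|) :
    ∃ v : ℝ, |v| = |y| ∧ v ^ 2 = y ^ 2 ∧ |x + y| = |x| + v ∧
      hfun r x * y = r * |x| ^ (r - 1) * v := by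
  have hax : 0 < |x| := abs_pos.2 hx
  have hmul : |x| * |x| ^ (r - 2) = |x| ^ (r - 1) := by
    nth_rewrite 1 [← Real.rpow_one |x|]
    rw [← Real.rpow_add hax]
    ring_nf
  rcases lt_or_gt_of_ne hx with hneg | hpos
  · refine ⟨-y, by rw [abs_neg], by ring, ?_, ?_⟩
    · rw [abs_of_neg hneg] at h ⊢
      have hy := abs_lt.1 h
      rw [← abs_neg, show -(x+y) = -x + -y by ring, abs_of_pos (by linarith)]
    · unfold hfun
      rw [abs_of_neg hneg] at hmul ⊢
      rw [show r * x * (-x) ^ (r-2) * y = r * (-x * (-x) ^ (r-2)) * (-y) by ring, hmul]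
  · refine ⟨y, rfl, rfl, ?_, ?_⟩
    · rw [abs_of_pos hpos] at h ⊢
      have hy := abs_lt.1 h
      rw [abs_of_pos (by linarith)]
    · unfold hfun
      rw [abs_of_pos hpos] at hmul ⊢
      rw [show r * x * x ^ (r-2) * y = r * (x * x ^ (r-2)) * y by ring, hmul]

/-- P1: the von Bahr–Esseen type pointwise inequality, crude constant. -/
lemma pointwise_p1 {r : ℝ} (hr1 : 1 ≤ r) (hr2 : r ≤ 2) (x y : ℝ) :
    |x + y| ^ r ≤ |x| ^ r + hfun r x * y + 16 * |y| ^ r := by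
  rcases le_or_gt |x| (2 * |y|) with hc | hc
  · have h1 : |x + y| ^ r ≤ 9 * |y| ^ r := by
      calc |x + y| ^ r ≤ (3 * |y|) ^ r := by
            apply Real.rpow_le_rpow (abs_nonneg _) _ (by linarith)
            calc |x + y| ≤ |x| + |y| := abs_add_le x y
              _ ≤ 3 * |y| := by linarith
        _ = 3 ^ r * |y| ^ r := Real.mul_rpow (by norm_num) (abs_nonneg y)
        _ ≤ 9 * |y| ^ r := by
            apply mul_le_mul_of_nonneg_right _ (Real.rpow_nonneg (abs_nonneg y) r)
            calc (3:ℝ) ^ r ≤ 3 ^ (2:ℝ) :=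
                  Real.rpow_le_rpow_of_exponent_le (by norm_num) hr2
              _ = 9 := by
                  rw [show (2:ℝ) = ((2:ℕ):ℝ) by norm_num, Real.rpow_natCast]; norm_num
    have h2 : |hfun r x * y| ≤ 4 * |y| ^ r := by
      rw [abs_mul]
      calc |hfun r x| * |y| ≤ (r * |x| ^ (r - 1)) * |y| :=
            mul_le_mul_of_nonneg_right (abs_hfun_le hr1 x) (abs_nonneg y)
        _ ≤ (r * (2 * |y|) ^ (r - 1)) * |y| := by
            apply mul_le_mul_of_nonneg_right _ (abs_nonneg y)
            apply mul_le_mul_of_nonneg_left _ (by linarith)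
            exact Real.rpow_le_rpow (abs_nonneg x) hc (by linarith)
        _ = r * 2 ^ (r - 1) * (|y| ^ (r - 1) * |y|) := by
            rw [Real.mul_rpow (by norm_num) (abs_nonneg y)]; ring
        _ = r * 2 ^ (r - 1) * |y| ^ r := by rw [rpow_pred_mul_self (abs_nonneg y) hr1]
        _ ≤ 4 * |y| ^ r := by
            apply mul_le_mul_of_nonneg_right _ (Real.rpow_nonneg (abs_nonneg y) r)
            have h21 : (2:ℝ) ^ (r - 1) ≤ 2 ^ (1:ℝ) :=
              Real.rpow_le_rpow_of_exponent_le (by norm_num) (by linarith)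
            have h22 : (0:ℝ) < 2 ^ (r-1) := Real.rpow_pos_of_pos (by norm_num) _
            rw [Real.rpow_one] at h21
            nlinarith
    have h3 : 0 ≤ |x| ^ r := Real.rpow_nonneg (abs_nonneg x) r
    have h4 := abs_le.1 h2
    linarith
  · have hx : x ≠ 0 := by
      intro h; rw [h, abs_zero] at hc; have := abs_nonneg y; linarith
    obtain ⟨v, hv1, _, hv3, hv4⟩ := decomp (r := r) (y := y) hx (by linarith [abs_nonneg y])
    have h := case2_p1 (u := |x|) (v := v) hr1 hr2 (abs_pos.2 hx)
      (by rw [hv1]; linarith [abs_nonneg y])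
    rw [hv1] at h
    rw [hv3, hv4]
    linarith [h, Real.rpow_nonneg (abs_nonneg y) r]

/-- P2: pointwise inequality for `r ≥ 2`. -/
lemma pointwise_p2 {r : ℝ} (hr2 : 2 ≤ r) (x y : ℝ) :
    |x + y| ^ r ≤ |x| ^ r + hfun r x * y
      + (3 ^ r + r * 2 ^ r + r * r * 2 ^ r) * (|x| ^ (r - 2) * y ^ 2 + |y| ^ r) := by
  have hr1 : (1:ℝ) ≤ r := by linarith
  have hyr : (0:ℝ) ≤ |y| ^ r := Real.rpow_nonneg (abs_nonneg y) r
  have hq : (0:ℝ) ≤ |x| ^ (r - 2) * y ^ 2 :=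
    mul_nonneg (Real.rpow_nonneg (abs_nonneg x) _) (sq_nonneg y)
  have h2rpos : (0:ℝ) < 2 ^ r := Real.rpow_pos_of_pos (by norm_num) r
  have h3rpos : (0:ℝ) < 3 ^ r := Real.rpow_pos_of_pos (by norm_num) r
  rcases le_or_gt |x| (2 * |y|) with hc | hc
  · have h1 : |x + y| ^ r ≤ 3 ^ r * |y| ^ r := by
      calc |x + y| ^ r ≤ (3 * |y|) ^ r := by
            apply Real.rpow_le_rpow (abs_nonneg _) _ (by linarith)
            calc |x + y| ≤ |x| + |y| := abs_add_le x y
              _ ≤ 3 * |y| := by linarith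
        _ = 3 ^ r * |y| ^ r := Real.mul_rpow (by norm_num) (abs_nonneg y)
    have h2 : |hfun r x * y| ≤ r * 2 ^ r * |y| ^ r := by
      rw [abs_mul]
      calc |hfun r x| * |y| ≤ (r * |x| ^ (r - 1)) * |y| :=
            mul_le_mul_of_nonneg_right (abs_hfun_le hr1 x) (abs_nonneg y)
        _ ≤ (r * (2 * |y|) ^ (r - 1)) * |y| := by
            apply mul_le_mul_of_nonneg_right _ (abs_nonneg y)
            apply mul_le_mul_of_nonneg_left _ (by linarith)
            exact Real.rpow_le_rpow (abs_nonneg x) hc (by linarith)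
        _ = r * 2 ^ (r - 1) * (|y| ^ (r - 1) * |y|) := by
            rw [Real.mul_rpow (by norm_num) (abs_nonneg y)]; ring
        _ = r * 2 ^ (r - 1) * |y| ^ r := by rw [rpow_pred_mul_self (abs_nonneg y) hr1]
        _ ≤ r * 2 ^ r * |y| ^ r := by
            apply mul_le_mul_of_nonneg_right _ hyr
            apply mul_le_mul_of_nonneg_left _ (by linarith)
            exact Real.rpow_le_rpow_of_exponent_le (by norm_num) (by linarith)
    have h3 : 0 ≤ |x| ^ r := Real.rpow_nonneg (abs_nonneg x) r
    have h4 := abs_le.1 h2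
    have hexp : (3 ^ r + r * 2 ^ r + r * r * 2 ^ r) * (|x| ^ (r - 2) * y ^ 2 + |y| ^ r)
        ≥ 3 ^ r * |y| ^ r + r * 2 ^ r * |y| ^ r := by
      have expand : (3 ^ r + r * 2 ^ r + r * r * 2 ^ r) * (|x| ^ (r - 2) * y ^ 2 + |y| ^ r)
          = (3 ^ r + r * 2 ^ r + r * r * 2 ^ r) * (|x| ^ (r - 2) * y ^ 2)
            + 3 ^ r * |y| ^ r + r * 2 ^ r * |y| ^ r + r * r * 2 ^ r * |y| ^ r := by ring
      have t1 : 0 ≤ (3 ^ r + r * 2 ^ r + r * r * 2 ^ r) * (|x| ^ (r - 2) * y ^ 2) := by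
        apply mul_nonneg _ hq
        positivity
      have t2 : 0 ≤ r * r * 2 ^ r * |y| ^ r := by positivity
      linarith
    linarith
  · have hx : x ≠ 0 := by
      intro h; rw [h, abs_zero] at hc; have := abs_nonneg y; linarith
    obtain ⟨v, hv1, hv2, hv3, hv4⟩ := decomp (r := r) (y := y) hx (by linarith [abs_nonneg y])
    have h := case2_p2 (u := |x|) (v := v) hr2 (abs_pos.2 hx)
      (by rw [hv1]; linarith [abs_nonneg y])
    rw [hv2] at h
    rw [hv3, hv4]
    have hmono : r * r * 2 ^ r * (|x| ^ (r - 2) * y ^ 2)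
        ≤ (3 ^ r + r * 2 ^ r + r * r * 2 ^ r) * (|x| ^ (r - 2) * y ^ 2) := by
      apply mul_le_mul_of_nonneg_right _ hq
      nlinarith
    have hmono2 : (0:ℝ) ≤ (3 ^ r + r * 2 ^ r + r * r * 2 ^ r) * |y| ^ r := by positivity
    have expand : (3 ^ r + r * 2 ^ r + r * r * 2 ^ r) * (|x| ^ (r - 2) * y ^ 2 + |y| ^ r)
        = (3 ^ r + r * 2 ^ r + r * r * 2 ^ r) * (|x| ^ (r - 2) * y ^ 2)
          + (3 ^ r + r * 2 ^ r + r * r * 2 ^ r) * |y| ^ r := by ring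
    linarith [h]


lemma young_pred {r a c : ℝ} (hr : 1 ≤ r) (ha : 0 ≤ a) (hc : 0 ≤ c) :
    a ^ (r - 1) * c ≤ a ^ r + c ^ r := by
  have h1 : ∀ b : ℝ, 0 ≤ b → b ^ (r-1) * b = b ^ r := by
    intro b hb
    rcases eq_or_lt_of_le hb with h | h
    · rw [← h, mul_zero, Real.zero_rpow (by linarith : (0:ℝ) < r).ne']
    · rw [Real.rpow_sub_one h.ne', div_mul_cancel₀]
      exact h.ne'
  rcases le_total a c with h | h
  · calc a ^ (r-1) * c ≤ c ^ (r-1) * c :=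
        mul_le_mul_of_nonneg_right (Real.rpow_le_rpow ha h (by linarith)) hc
      _ = c ^ r := h1 c hc
      _ ≤ a ^ r + c ^ r := by linarith [Real.rpow_nonneg ha r]
  · calc a ^ (r-1) * c ≤ a ^ (r-1) * a :=
        mul_le_mul_of_nonneg_left h (Real.rpow_nonneg ha _)
      _ = a ^ r := h1 a ha
      _ ≤ a ^ r + c ^ r := by linarith [Real.rpow_nonneg hc r]

/-- Weighted Young for the quadratic term. -/
lemma young_two {r M x y : ℝ} (hr : 2 ≤ r) (hM : 1 ≤ M) (hx : 0 ≤ x) :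
    x ^ (r - 2) * y ^ 2 ≤ (1 / M) * x ^ r + M ^ ((r - 2)/2) * |y| ^ r := by
  have hM0 : (0:ℝ) < M := by linarith
  have hMr : (0:ℝ) ≤ M ^ ((r-2)/2) := Real.rpow_nonneg hM0.le _
  have hsq : Real.sqrt M = M ^ ((1:ℝ)/2) := Real.sqrt_eq_rpow M
  have hmul2 : ∀ b : ℝ, 0 ≤ b → b ^ (r-2) * b ^ 2 = b ^ r := by
    intro b hb
    rcases eq_or_lt_of_le hb with h | h
    · rw [← h]
      rw [show ((0:ℝ)) ^ 2 = 0 by norm_num, mul_zero,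
        Real.zero_rpow (by linarith : (0:ℝ) < r).ne']
    · rw [show b ^ 2 = b ^ ((2:ℕ):ℝ) by rw [Real.rpow_natCast],
        ← Real.rpow_add h]
      norm_num
  rcases le_total x (Real.sqrt M * |y|) with h | h
  · have h1 : x ^ (r-2) ≤ (Real.sqrt M * |y|) ^ (r-2) :=
      Real.rpow_le_rpow hx h (by linarith)
    have h2 : (Real.sqrt M * |y|) ^ (r-2) = M ^ ((r-2)/2) * |y| ^ (r-2) := by
      rw [Real.mul_rpow (Real.sqrt_nonneg M) (abs_nonneg y), hsq,
        ← Real.rpow_mul hM0.le]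
      ring_nf
    have h3 : x ^ (r-2) * y ^ 2 ≤ M ^ ((r-2)/2) * (|y| ^ (r-2) * |y| ^ 2) := by
      rw [← sq_abs y]
      calc x ^ (r-2) * |y| ^ 2 ≤ (M ^ ((r-2)/2) * |y| ^ (r-2)) * |y| ^ 2 := by
            apply mul_le_mul_of_nonneg_right _ (sq_nonneg _)
            rw [← h2]; exact h1
        _ = M ^ ((r-2)/2) * (|y| ^ (r-2) * |y| ^ 2) := by ring
    rw [hmul2 |y| (abs_nonneg y)] at h3
    have : 0 ≤ (1/M) * x ^ r := by positivity
    linarith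
  · have hsq2 : M * y ^ 2 ≤ x ^ 2 := by
      have h0 : 0 ≤ Real.sqrt M * |y| := by positivity
      have h5 := mul_self_le_mul_self h0 h
      calc M * y ^ 2 = (Real.sqrt M * Real.sqrt M) * (|y| * |y|) := by
            rw [Real.mul_self_sqrt hM0.le, abs_mul_abs_self]; ring
        _ = (Real.sqrt M * |y|) * (Real.sqrt M * |y|) := by ring
        _ ≤ x * x := h5
        _ = x ^ 2 := (sq x).symm
    have h6 : x ^ (r-2) * y ^ 2 ≤ x ^ (r-2) * (x ^ 2 / M) := by
      apply mul_le_mul_of_nonneg_left _ (Real.rpow_nonneg hx _)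
      rw [le_div_iff₀ hM0]
      linarith [hsq2]
    have h7 : x ^ (r-2) * (x ^ 2 / M) = (1/M) * (x ^ (r-2) * x ^ 2) := by ring
    rw [h7, hmul2 x hx] at h6
    have : 0 ≤ M ^ ((r-2)/2) * |y| ^ r :=
      mul_nonneg hMr (Real.rpow_nonneg (abs_nonneg y) r)
    linarith


noncomputable def CC (r : ℝ) : ℝ := 3 ^ r + r * 2 ^ r + r * r * 2 ^ r + 16

lemma CC_pos {r : ℝ} (hr : 1 ≤ r) : 0 < CC r := by
  unfold CC
  have h2 : (0:ℝ) < 2 ^ r := Real.rpow_pos_of_pos (by norm_num) r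
  have h3 : (0:ℝ) < 3 ^ r := Real.rpow_pos_of_pos (by norm_num) r
  nlinarith

lemma sixteen_le_CC {r : ℝ} (hr : 1 ≤ r) : 16 ≤ CC r := by
  unfold CC
  have h2 : (0:ℝ) < 2 ^ r := Real.rpow_pos_of_pos (by norm_num) r
  have h3 : (0:ℝ) < 3 ^ r := Real.rpow_pos_of_pos (by norm_num) r
  nlinarith

lemma pointwise_step {r M : ℝ} (hr : 1 ≤ r) (hM : 1 ≤ M) (x y : ℝ) :
    |x + y| ^ r ≤ (1 + CC r / M) * |x| ^ r + hfun r x * y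
      + CC r * (M ^ (max (r/2) 1 - 1) + 1) * |y| ^ r := by
  have hM0 : (0:ℝ) < M := by linarith
  have hCC := CC_pos hr
  have h16 := sixteen_le_CC hr
  have hxr : (0:ℝ) ≤ |x| ^ r := Real.rpow_nonneg (abs_nonneg x) r
  have hyr : (0:ℝ) ≤ |y| ^ r := Real.rpow_nonneg (abs_nonneg y) r
  rcases le_total r 2 with h2 | h2
  · have hmax : max (r/2) 1 = 1 := max_eq_right (by linarith)
    rw [hmax, sub_self, Real.rpow_zero]
    have hp1 := pointwise_p1 hr h2 x y
    have hd : (0:ℝ) ≤ CC r / M * |x| ^ r :=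
      mul_nonneg (div_nonneg hCC.le hM0.le) hxr
    have hc2 : 16 * |y| ^ r ≤ CC r * (1 + 1) * |y| ^ r := by
      apply mul_le_mul_of_nonneg_right _ hyr
      linarith
    linarith
  · have hmax : max (r/2) 1 = r/2 := max_eq_left (by linarith)
    rw [hmax, show r/2 - 1 = (r-2)/2 by ring]
    have hp2 := pointwise_p2 h2 x y
    set C2 := 3 ^ r + r * 2 ^ r + r * r * 2 ^ r with hC2def
    have hC2pos : 0 < C2 := by
      have h2' : (0:ℝ) < 2 ^ r := Real.rpow_pos_of_pos (by norm_num) r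
      have h3' : (0:ℝ) < 3 ^ r := Real.rpow_pos_of_pos (by norm_num) r
      rw [hC2def]; nlinarith
    have hC2CC : C2 ≤ CC r := by rw [hC2def]; unfold CC; linarith
    have hyoung := young_two (y := y) h2 hM (abs_nonneg x)
    have hMg : (0:ℝ) ≤ M ^ ((r-2)/2) := Real.rpow_nonneg hM0.le _
    have hq : (0:ℝ) ≤ |x| ^ (r - 2) * y ^ 2 :=
      mul_nonneg (Real.rpow_nonneg (abs_nonneg x) _) (sq_nonneg y)
    have hstep : C2 * (|x| ^ (r-2) * y ^ 2)
        ≤ C2 * ((1/M) * |x| ^ r + M ^ ((r-2)/2) * |y| ^ r) :=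
      mul_le_mul_of_nonneg_left hyoung hC2pos.le
    have he1 : C2 * ((1/M) * |x| ^ r + M ^ ((r-2)/2) * |y| ^ r)
        = C2/M * |x| ^ r + C2 * M ^ ((r-2)/2) * |y| ^ r := by ring
    have he2 : C2/M * |x| ^ r ≤ CC r/M * |x| ^ r := by
      apply mul_le_mul_of_nonneg_right _ hxr
      gcongr
    have he3 : C2 * M ^ ((r-2)/2) * |y| ^ r + C2 * |y| ^ r
        ≤ CC r * (M ^ ((r-2)/2) + 1) * |y| ^ r := by
      have : C2 * M ^ ((r-2)/2) + C2 ≤ CC r * (M ^ ((r-2)/2) + 1) := by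
        have hA : C2 * M ^ ((r-2)/2) ≤ CC r * M ^ ((r-2)/2) :=
          mul_le_mul_of_nonneg_right hC2CC hMg
        nlinarith
      calc C2 * M ^ ((r-2)/2) * |y| ^ r + C2 * |y| ^ r
          = (C2 * M ^ ((r-2)/2) + C2) * |y| ^ r := by ring
        _ ≤ CC r * (M ^ ((r-2)/2) + 1) * |y| ^ r :=
          mul_le_mul_of_nonneg_right this hyr
    have hexpand : C2 * (|x| ^ (r - 2) * y ^ 2 + |y| ^ r)
        = C2 * (|x| ^ (r-2) * y ^ 2) + C2 * |y| ^ r := by ring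
    have hd : (0:ℝ) ≤ CC r / M * |x| ^ r :=
      mul_nonneg (div_nonneg hCC.le hM0.le) hxr
    have hge : (1 + CC r / M) * |x| ^ r = |x| ^ r + CC r / M * |x| ^ r := by ring
    rw [he1] at hstep
    calc |x + y| ^ r
        ≤ |x| ^ r + hfun r x * y + C2 * (|x| ^ (r - 2) * y ^ 2 + |y| ^ r) := hp2
      _ = |x| ^ r + hfun r x * y + (C2 * (|x| ^ (r - 2) * y ^ 2) + C2 * |y| ^ r) := by
          rw [hexpand]
      _ ≤ |x| ^ r + hfun r x * y
          + ((C2 / M * |x| ^ r + C2 * M ^ ((r - 2) / 2) * |y| ^ r) + C2 * |y| ^ r) := by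
          linarith [hstep]
      _ ≤ |x| ^ r + CC r / M * |x| ^ r + hfun r x * y
          + CC r * (M ^ ((r - 2) / 2) + 1) * |y| ^ r := by
          linarith [he2, he3]
      _ = (1 + CC r / M) * |x| ^ r + hfun r x * y
          + CC r * (M ^ ((r - 2) / 2) + 1) * |y| ^ r := by ring


noncomputable def KK (r : ℝ) : ℝ := 2 * CC r * Real.exp (CC r)

lemma KK_nonneg {r : ℝ} (hr : 1 ≤ r) : 0 ≤ KK r := by
  unfold KK
  have := CC_pos hr
  positivity

variable {Ω : Type} [MeasureSpace Ω] [IsProbabilityMeasure (ℙ : Measure Ω)]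

lemma memℒp_of_integrable_abs_rpow {r : ℝ} (hr : 1 ≤ r) {f : Ω → ℝ} (hf : Measurable f)
    (hint : Integrable (fun ω => |f ω| ^ r) ℙ) : MemLp f (ENNReal.ofReal r) ℙ := by
  have pr0 : ENNReal.ofReal r ≠ 0 := by
    simp [ENNReal.ofReal_eq_zero]; linarith
  have prtop : ENNReal.ofReal r ≠ ⊤ := ENNReal.ofReal_ne_top
  have h := (memLp_norm_rpow_iff (q := ENNReal.ofReal r) (p := ENNReal.ofReal r) (μ := ℙ)
    hf.aestronglyMeasurable pr0 prtop)
  rw [ENNReal.div_self pr0 prtop, memLp_one_iff_integrable] at h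
  apply h.mp
  have : (ENNReal.ofReal r).toReal = r := ENNReal.toReal_ofReal (by linarith)
  rw [this]
  simpa [Real.norm_eq_abs] using hint

lemma integrable_abs_rpow_of_memℒp {r : ℝ} (hr : 1 ≤ r) {f : Ω → ℝ}
    (hf : MemLp f (ENNReal.ofReal r) ℙ) : Integrable (fun ω => |f ω| ^ r) ℙ := by
  have pr0 : ENNReal.ofReal r ≠ 0 := by
    simp [ENNReal.ofReal_eq_zero]; linarith
  have h := hf.integrable_norm_rpow pr0 ENNReal.ofReal_ne_top
  rw [ENNReal.toReal_ofReal (by linarith : (0:ℝ) ≤ r)] at h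
  simpa [Real.norm_eq_abs] using h

lemma core {r : ℝ} (hr : 1 ≤ r) (m : ℕ) (b Z : ℕ → Ω → ℝ)
    (hbm : ∀ j, Measurable (b j)) (hZm : ∀ j, Measurable (Z j))
    (hbL : ∀ j < m, MemLp (b j) (ENNReal.ofReal r) ℙ)
    (hZL : ∀ j < m, MemLp (Z j) (ENNReal.ofReal r) ℙ)
    (hZ0 : ∀ j < m, ∫ ω, Z j ω ∂ℙ = 0)
    (hInd : ∀ j < m, IndepFun
      (fun ω => ((fun l : Fin j => b l.1 ω * Z l.1 ω), b j ω)) (Z j) ℙ)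
    (c : ℝ) (hc : ∀ j < m, (∫ ω, |b j ω| ^ r ∂ℙ) * (∫ ω, |Z j ω| ^ r ∂ℙ) ≤ c) :
    MemLp (fun ω => ∑ j ∈ Finset.range m, b j ω * Z j ω) (ENNReal.ofReal r) ℙ ∧
    (∫ ω, |∑ j ∈ Finset.range m, b j ω * Z j ω| ^ r ∂ℙ)
      ≤ KK r * (m:ℝ) ^ (max (r/2) 1) * c := by
  have pr0 : ENNReal.ofReal r ≠ 0 := by
    simp [ENNReal.ofReal_eq_zero]; linarith
  have prtop : ENNReal.ofReal r ≠ ⊤ := ENNReal.ofReal_ne_top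
  have pr1 : 1 ≤ ENNReal.ofReal r := by
    rw [← ENNReal.ofReal_one]
    exact ENNReal.ofReal_le_ofReal hr
  have hrpos : (0:ℝ) < r := by linarith
  rcases Nat.eq_zero_or_pos m with rfl | hm
  · constructor
    · simpa using memLp_const (0:ℝ)
    · simp [Real.zero_rpow hrpos.ne']
      rw [Real.zero_rpow (by positivity : max (r/2) 1 ≠ 0)]
      simp
  -- main case
  have hM : (1:ℝ) ≤ (m:ℝ) := by exact_mod_cast hm
  have hM0 : (0:ℝ) < (m:ℝ) := by linarith
  set M := (m:ℝ) with hMdef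
  have hCC := CC_pos hr
  have hc0 : 0 ≤ c := by
    refine le_trans ?_ (hc 0 hm)
    apply mul_nonneg <;> exact integral_nonneg fun ω => Real.rpow_nonneg (abs_nonneg _) r
  set γ := max (r/2) 1 - 1 with hγdef
  have hγ0 : 0 ≤ γ := by
    rw [hγdef]
    linarith [le_max_right (r/2) (1:ℝ)]
  set q := 1 + CC r / M with hqdef
  have hq1 : (1:ℝ) ≤ q := by
    rw [hqdef]
    linarith [div_nonneg hCC.le hM0.le]
  set d := CC r * (M ^ γ + 1) * c with hddef
  have hMγ : (1:ℝ) ≤ M ^ γ := Real.one_le_rpow hM hγ0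
  have hd0 : 0 ≤ d := by
    apply mul_nonneg _ hc0
    apply mul_nonneg hCC.le
    linarith
  set S : ℕ → Ω → ℝ := fun j ω => ∑ l ∈ Finset.range j, b l ω * Z l ω with hSdef
  have hSm : ∀ j, Measurable (S j) := fun j =>
    Finset.measurable_sum _ fun l _ => (hbm l).mul (hZm l)
  have claim : ∀ j, j ≤ m → MemLp (S j) (ENNReal.ofReal r) ℙ ∧
      (∫ ω, |S j ω| ^ r ∂ℙ) ≤ q ^ j * j * d := by
    intro j
    induction j with
    | zero =>
      intro _
      constructor
      · have h0 : S 0 = fun _ => (0:ℝ) := by funext ω; simp [hSdef]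
        rw [h0]
        exact memLp_const (0:ℝ)
      · simp [hSdef, Real.zero_rpow hrpos.ne']
    | succ j ih =>
      intro hj1
      have hjm : j < m := hj1
      obtain ⟨ihL, ihI⟩ := ih (le_of_lt hjm)
      set W : Ω → ℝ := fun ω => b j ω * Z j ω with hWdef
      have hWm : Measurable W := (hbm j).mul (hZm j)
      have hbphi : Integrable (fun ω => |b j ω| ^ r) ℙ :=
        integrable_abs_rpow_of_memℒp hr (hbL j hjm)
      have hZphi : Integrable (fun ω => |Z j ω| ^ r) ℙ :=
        integrable_abs_rpow_of_memℒp hr (hZL j hjm)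
      have hSphi : Integrable (fun ω => |S j ω| ^ r) ℙ :=
        integrable_abs_rpow_of_memℒp hr ihL
      have hIndbZ : IndepFun (b j) (Z j) ℙ := by
        have := (hInd j hjm).comp (measurable_snd) (measurable_id)
        exact this
      have habsf : Measurable fun x : ℝ => |x| ^ r := measurable_abs.pow_const r
      have habs : IndepFun (fun ω => |b j ω| ^ r) (fun ω => |Z j ω| ^ r) ℙ := by
        have := hIndbZ.comp habsf habsf
        exact this
      have heqW : ∀ ω, |W ω| ^ r = |b j ω| ^ r * |Z j ω| ^ r := by
        intro ω
        rw [hWdef]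
        simp only
        rw [abs_mul, Real.mul_rpow (abs_nonneg _) (abs_nonneg _)]
      have hWrpow_int : Integrable (fun ω => |W ω| ^ r) ℙ := by
        have h := habs.integrable_mul hbphi hZphi
        have h2 : (fun ω => |b j ω| ^ r) * (fun ω => |Z j ω| ^ r)
            = fun ω => |b j ω| ^ r * |Z j ω| ^ r := rfl
        rw [h2] at h
        apply h.congr
        filter_upwards with ω using (heqW ω).symm
      have hWL : MemLp W (ENNReal.ofReal r) ℙ :=
        memℒp_of_integrable_abs_rpow hr hWm hWrpow_int
      have hWint_le : (∫ ω, |W ω| ^ r ∂ℙ) ≤ c := by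
        have h1 : (∫ ω, |W ω| ^ r ∂ℙ) = ∫ ω, |b j ω| ^ r * |Z j ω| ^ r ∂ℙ := by
          congr 1; funext ω; exact heqW ω
        have h2 := habs.integral_fun_mul_eq_mul_integral hbphi.aestronglyMeasurable hZphi.aestronglyMeasurable
        rw [h1, h2]
        exact hc j hjm
      have hsucc : S (j+1) = fun ω => S j ω + W ω := by
        funext ω
        simp only [hSdef, hWdef]
        exact Finset.sum_range_succ _ j
      have hSL : MemLp (S (j+1)) (ENNReal.ofReal r) ℙ := by
        rw [hsucc]; exact ihL.add hWL
      refine ⟨hSL, ?_⟩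
      -- cross term
      set G : Ω → ℝ := fun ω => hfun r (S j ω) * b j ω with hGdef
      have hGm : Measurable G := ((hfun_measurable r).comp (hSm j)).mul (hbm j)
      have hGZ_ind : IndepFun G (Z j) ℙ := by
        have hψ : Measurable (fun vp : (Fin j → ℝ) × ℝ =>
            hfun r (∑ l : Fin j, vp.1 l) * vp.2) := by
          apply Measurable.mul _ measurable_snd
          apply (hfun_measurable r).comp
          exact Finset.measurable_sum _ fun l _ => (measurable_pi_apply l).comp measurable_fst
        have := (hInd j hjm).comp hψ measurable_id
        have heq : (fun vp : (Fin j → ℝ) × ℝ => hfun r (∑ l : Fin j, vp.1 l) * vp.2) ∘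
            (fun ω => ((fun l : Fin j => b l.1 ω * Z l.1 ω), b j ω)) = G := by
          funext ω
          simp only [Function.comp, hGdef, hSdef]
          congr 2
          exact (Fin.sum_univ_eq_sum_range (fun l => b l ω * Z l ω) j)
        rwa [heq] at this
      have hcross : (∫ ω, G ω * Z j ω ∂ℙ) = 0 := by
        rw [hGZ_ind.integral_fun_mul_eq_mul_integral hGm.aestronglyMeasurable (hZm j).aestronglyMeasurable,
          hZ0 j hjm, mul_zero]
      have hG_int : Integrable G ℙ := by
        apply Integrable.mono' ((hSphi.add hbphi).const_mul r) hGm.aestronglyMeasurable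
        filter_upwards with ω
        have h1 : |G ω| ≤ (r * |S j ω| ^ (r-1)) * |b j ω| := by
          rw [hGdef]
          simp only
          rw [abs_mul]
          exact mul_le_mul_of_nonneg_right (abs_hfun_le hr _) (abs_nonneg _)
        have h2 : |S j ω| ^ (r-1) * |b j ω| ≤ |S j ω| ^ r + |b j ω| ^ r :=
          young_pred hr (abs_nonneg _) (abs_nonneg _)
        calc |G ω| ≤ (r * |S j ω| ^ (r-1)) * |b j ω| := h1
          _ = r * (|S j ω| ^ (r-1) * |b j ω|) := by ring
          _ ≤ r * (|S j ω| ^ r + |b j ω| ^ r) :=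
            mul_le_mul_of_nonneg_left h2 (by linarith)
      have hZ_int : Integrable (Z j) ℙ := (hZL j hjm).integrable pr1
      have hGZ_int : Integrable (fun ω => G ω * Z j ω) ℙ := by
        have := hGZ_ind.integrable_mul hG_int hZ_int
        exact this
      -- pointwise step and integration
      have hpt : ∀ ω, |S (j+1) ω| ^ r ≤ (1 + CC r / M) * |S j ω| ^ r + G ω * Z j ω
          + CC r * (M ^ γ + 1) * |W ω| ^ r := by
        intro ω
        have h := pointwise_step (M := M) hr hM (S j ω) (W ω)
        have he : G ω * Z j ω = hfun r (S j ω) * W ω := by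
          rw [hGdef, hWdef]; simp only; ring
        rw [hsucc]
        simp only
        rw [he]
        simpa [hγdef] using h
      have hRHS_int : Integrable (fun ω => (1 + CC r / M) * |S j ω| ^ r + G ω * Z j ω
          + CC r * (M ^ γ + 1) * |W ω| ^ r) ℙ :=
        ((hSphi.const_mul _).add hGZ_int).add (hWrpow_int.const_mul _)
      have hLHS_int : Integrable (fun ω => |S (j+1) ω| ^ r) ℙ :=
        integrable_abs_rpow_of_memℒp hr hSL
      have hmono := integral_mono hLHS_int hRHS_int hpt
      have hsplit : (∫ ω, ((1 + CC r / M) * |S j ω| ^ r + G ω * Z j ω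
            + CC r * (M ^ γ + 1) * |W ω| ^ r) ∂ℙ)
          = (1 + CC r / M) * (∫ ω, |S j ω| ^ r ∂ℙ) + (∫ ω, G ω * Z j ω ∂ℙ)
            + CC r * (M ^ γ + 1) * (∫ ω, |W ω| ^ r ∂ℙ) := by
        have hint1 : Integrable (fun ω => (1 + CC r / M) * |S j ω| ^ r + G ω * Z j ω) ℙ :=
          (hSphi.const_mul _).add hGZ_int
        have hint2 : Integrable (fun ω => CC r * (M ^ γ + 1) * |W ω| ^ r) ℙ :=
          hWrpow_int.const_mul _
        rw [integral_add hint1 hint2, integral_add (hSphi.const_mul _) hGZ_int,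
          MeasureTheory.integral_const_mul, MeasureTheory.integral_const_mul]
      rw [hsplit, hcross, add_zero] at hmono
      have hstep : (∫ ω, |S (j+1) ω| ^ r ∂ℙ) ≤ q * (∫ ω, |S j ω| ^ r ∂ℙ) + d := by
        rw [hqdef, hddef]
        have h2 : CC r * (M ^ γ + 1) * (∫ ω, |W ω| ^ r ∂ℙ) ≤ CC r * (M ^ γ + 1) * c := by
          apply mul_le_mul_of_nonneg_left hWint_le
          apply mul_nonneg hCC.le
          linarith
        linarith [hmono]
      -- recursion arithmetic
      have hqj : (1:ℝ) ≤ q ^ (j+1) := by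
        simpa using pow_le_pow_left₀ zero_le_one hq1 (j+1)
      calc (∫ ω, |S (j+1) ω| ^ r ∂ℙ) ≤ q * (∫ ω, |S j ω| ^ r ∂ℙ) + d := hstep
        _ ≤ q * (q ^ j * j * d) + d := by
            have := mul_le_mul_of_nonneg_left ihI (by linarith : (0:ℝ) ≤ q)
            linarith
        _ = q ^ (j+1) * j * d + d := by ring
        _ ≤ q ^ (j+1) * j * d + q ^ (j+1) * d := by
            nlinarith [hqj, hd0, mul_nonneg (sub_nonneg.2 hqj) hd0]
        _ = q ^ (j+1) * (j+1 : ℕ) * d := by push_cast; ring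
  -- finish
  obtain ⟨hSL, hSI⟩ := claim m le_rfl
  refine ⟨hSL, ?_⟩
  have hqm : q ^ m ≤ Real.exp (CC r) := by
    have h1 : q ≤ Real.exp (CC r / M) := by
      rw [hqdef, add_comm]
      exact Real.add_one_le_exp _
    calc q ^ m ≤ (Real.exp (CC r / M)) ^ m := pow_le_pow_left₀ (by linarith) h1 m
      _ = Real.exp ((m:ℝ) * (CC r / M)) := (Real.exp_nat_mul _ m).symm
      _ = Real.exp (CC r) := by
          congr 1
          rw [hMdef]
          field_simp
  have hMpow : M ^ (max (r/2) 1) = M ^ γ * M := by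
    have h1 : γ + 1 = max (r/2) 1 := by rw [hγdef]; ring
    rw [← h1, Real.rpow_add hM0, Real.rpow_one]
  calc (∫ ω, |S m ω| ^ r ∂ℙ) ≤ q ^ m * m * d := hSI
    _ ≤ Real.exp (CC r) * m * d := by
        apply mul_le_mul_of_nonneg_right _ hd0
        exact mul_le_mul_of_nonneg_right hqm hM0.le
    _ = Real.exp (CC r) * M * (CC r * (M ^ γ + 1) * c) := by rw [hddef, hMdef]
    _ ≤ Real.exp (CC r) * M * (CC r * (2 * M ^ γ) * c) := by
        apply mul_le_mul_of_nonneg_left _ (by positivity)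
        apply mul_le_mul_of_nonneg_right _ hc0
        apply mul_le_mul_of_nonneg_left _ hCC.le
        linarith
    _ = KK r * (M ^ γ * M) * c := by rw [KK]; ring
    _ = KK r * M ^ (max (r/2) 1) * c := by rw [hMpow]


/-- `matProd` is a measurable function of the entries. -/
lemma matProd_measurable {α : Type*} [MeasurableSpace α] (n : ℕ → ℕ) (B : ℕ → ℕ → ℕ → α → ℝ)
    (hB : ∀ q x y, Measurable (B q x y)) (p : ℕ) :
    ∀ i j, Measurable (fun a => matProd n (fun q x y => B q x y a) p i j) := by
  induction p with
  | zero => exact fun i j => hB 0 i j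
  | succ p ih =>
    intro i k
    have : (fun a => matProd n (fun q x y => B q x y a) (p+1) i k)
        = fun a => ∑ x ∈ Finset.range (n (p+1)),
            matProd n (fun q x y => B q x y a) p i x * B (p+1) x k a := rfl
    rw [this]
    exact Finset.measurable_sum _ fun x _ => (ih i x).mul (hB (p+1) x k)

/-- `matProd` only depends on entries with bounded indices. -/
lemma matProd_congr (n : ℕ → ℕ) (A A' : ℕ → ℕ → ℕ → ℝ) (N : ℕ) (p : ℕ)
    (hA : ∀ q x y, q ≤ p → x ≤ N → y ≤ N → A q x y = A' q x y)
    (hn : ∀ q, q ≤ p → n q ≤ N) :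
    ∀ i j, i ≤ N → j ≤ N → matProd n A p i j = matProd n A' p i j := by
  induction p with
  | zero => exact fun i j hi hj => hA 0 i j le_rfl hi hj
  | succ p ih =>
    intro i k hi hk
    show (∑ x ∈ Finset.range (n (p+1)), matProd n A p i x * A (p+1) x k)
      = ∑ x ∈ Finset.range (n (p+1)), matProd n A' p i x * A' (p+1) x k
    apply Finset.sum_congr rfl
    intro x hx
    have hxN : x ≤ N := le_trans (Nat.le_of_lt_succ (Nat.lt_succ_of_lt (Finset.mem_range.1 hx)))
      (hn (p+1) le_rfl)
    rw [ih (fun q x y hq => hA q x y (le_trans hq (Nat.le_succ p)))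
        (fun q hq => hn q (le_trans hq (Nat.le_succ p))) i x hi hxN,
      hA (p+1) x k le_rfl hxN hk]

/-- The key independence fact. -/
lemma indep_helper (n : ℕ → ℕ) (A : ℕ → ℕ → ℕ → Ω → ℝ)
    (hmeas : ∀ q x y, Measurable (A q x y))
    (hIndep : iIndepFun
      (fun t : ℕ × ℕ × ℕ => A t.1 t.2.1 t.2.2) ℙ)
    (t i k j : ℕ) :
    IndepFun (fun ω =>
        ((fun l : Fin j => matProd n (fun q x y => A q x y ω) t i l.1 * A (t+1) l.1 k ω),
          matProd n (fun q x y => A q x y ω) t i j))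
      (A (t+1) j k) ℙ := by
  classical
  set N : ℕ := i + j + k + ∑ q ∈ Finset.range (t+1), n q with hNdef
  have hiN : i ≤ N := by omega
  have hjN : j ≤ N := by omega
  have hkN : k ≤ N := by omega
  have hnN : ∀ q, q ≤ t → n q ≤ N := by
    intro q hq
    have : n q ≤ ∑ q ∈ Finset.range (t+1), n q :=
      Finset.single_le_sum (fun _ _ => Nat.zero_le _) (Finset.mem_range.2 (by omega))
    omega
  set S : Finset (ℕ × ℕ × ℕ) :=
    (Finset.range (t+1) ×ˢ Finset.range (N+1) ×ˢ Finset.range (N+1)) ∪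
      (Finset.range j).image (fun l => (t+1, l, k)) with hSdef
  set T : Finset (ℕ × ℕ × ℕ) := {(t+1, j, k)} with hTdef
  have hdisj : Disjoint S T := by
    rw [hTdef, Finset.disjoint_singleton_right, hSdef]
    intro hmem
    rcases Finset.mem_union.1 hmem with h | h
    · simp only [Finset.mem_product, Finset.mem_range] at h
      omega
    · rcases Finset.mem_image.1 h with ⟨l, hl, hlk⟩
      have : l = j := by
        have := congrArg (fun z : ℕ × ℕ × ℕ => z.2.1) hlk
        simpa using this
      rw [this] at hl
      exact absurd (Finset.mem_range.1 hl) (lt_irrefl j)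
  have base := hIndep.indepFun_finset S T hdisj (fun tt => hmeas tt.1 tt.2.1 tt.2.2)
  -- the evaluation map
  set Ev : (S → ℝ) → ℕ → ℕ → ℕ → ℝ :=
    fun v q x y => if h : ((q, x, y) : ℕ × ℕ × ℕ) ∈ S then v ⟨(q,x,y), h⟩ else 0 with hEvdef
  have hEvm : ∀ q x y, Measurable (fun v : S → ℝ => Ev v q x y) := by
    intro q x y
    rw [hEvdef]
    by_cases h : ((q, x, y) : ℕ × ℕ × ℕ) ∈ S
    · simp only [h, dif_pos]
      exact measurable_pi_apply _
    · simp only [h, dif_neg, not_false_iff]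
      exact measurable_const
  set φ : (S → ℝ) → (Fin j → ℝ) × ℝ := fun v =>
    ((fun l : Fin j => matProd n (Ev v) t i l.1 * Ev v (t+1) l.1 k),
      matProd n (Ev v) t i j) with hφdef
  have hφm : Measurable φ := by
    rw [hφdef]
    apply Measurable.prodMk
    · apply measurable_pi_lambda
      intro l
      exact (matProd_measurable n (fun q x y v => Ev v q x y) hEvm t i l.1).mul
        (hEvm (t+1) l.1 k)
    · exact matProd_measurable n (fun q x y v => Ev v q x y) hEvm t i j
  have hjkT : ((t+1, j, k) : ℕ × ℕ × ℕ) ∈ T := Finset.mem_singleton_self _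
  set ψ : (T → ℝ) → ℝ := fun w => w ⟨(t+1, j, k), hjkT⟩ with hψdef
  have hψm : Measurable ψ := measurable_pi_apply _
  have comp := base.comp hφm hψm
  -- identify the two sides
  have hleft : (φ ∘ fun ω (tt : S) => A tt.1.1 tt.1.2.1 tt.1.2.2 ω) = fun ω =>
      ((fun l : Fin j => matProd n (fun q x y => A q x y ω) t i l.1 * A (t+1) l.1 k ω),
        matProd n (fun q x y => A q x y ω) t i j) := by
    funext ω
    have hEv_eq : ∀ q x y, q ≤ t → x ≤ N → y ≤ N →
        Ev (fun tt : S => A tt.1.1 tt.1.2.1 tt.1.2.2 ω) q x y = A q x y ω := by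
      intro q x y hq hx hy
      have hmem : ((q, x, y) : ℕ × ℕ × ℕ) ∈ S := by
        rw [hSdef]
        apply Finset.mem_union_left
        simp only [Finset.mem_product, Finset.mem_range]
        exact ⟨by omega, by omega, by omega⟩
      rw [hEvdef]
      simp only [hmem, dif_pos]
    have hEv_last : ∀ l, l < j →
        Ev (fun tt : S => A tt.1.1 tt.1.2.1 tt.1.2.2 ω) (t+1) l k = A (t+1) l k ω := by
      intro l hl
      have hmem : ((t+1, l, k) : ℕ × ℕ × ℕ) ∈ S := by
        rw [hSdef]
        apply Finset.mem_union_right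
        exact Finset.mem_image.2 ⟨l, Finset.mem_range.2 hl, rfl⟩
      rw [hEvdef]
      simp only [hmem, dif_pos]
    have hmp : ∀ l, l ≤ N → matProd n (Ev (fun tt : S => A tt.1.1 tt.1.2.1 tt.1.2.2 ω)) t i l
        = matProd n (fun q x y => A q x y ω) t i l := by
      intro l hl
      exact matProd_congr n _ _ N t (fun q x y hq hx hy => hEv_eq q x y hq hx hy) hnN i l hiN hl
    simp only [Function.comp, hφdef]
    refine Prod.ext ?_ ?_
    · funext l
      simp only
      rw [hmp l.1 (le_trans (Nat.le_of_lt_succ (Nat.lt_succ_of_lt l.2)) hjN),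
        hEv_last l.1 l.2]
    · simp only
      exact hmp j hjN
  have hright : (ψ ∘ fun ω (tt : T) => A tt.1.1 tt.1.2.1 tt.1.2.2 ω) = A (t+1) j k := by
    funext ω
    simp only [Function.comp, hψdef]
  rw [hleft, hright] at comp
  exact comp


end ME

/-- moment estimate for matrix entries: for `α ≥ 1/2` and `p ≥ 1` there is a
constant `C` (depending only on `α` and `p`) such that for a product `P = A⁽¹⁾ ⋯ A⁽ᵖ⁾` of
independent random matrices with i.i.d. centered entries with finite moment of order `2α`,
`E[|P_{ij}|^{2α}] ≤ C (n₁ ⋯ n_{p-1})^{max(α,1)} E[|A⁽¹⁾₁₁|^{2α}] ⋯ E[|A⁽ᵖ⁾₁₁|^{2α}]`. -/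
theorem moment_estimate_product_entries
    (α : ℝ) (hα : (1 : ℝ) / 2 ≤ α) (p : ℕ) (hp : 1 ≤ p) :
    ∃ C : ℝ, ∀ (Ω : Type) [MeasureSpace Ω] [IsProbabilityMeasure (ℙ : Measure Ω)],
    ∀ n : ℕ → ℕ, ∀ A : ℕ → ℕ → ℕ → Ω → ℝ,
      (∀ q i j, Measurable (A q i j)) →
      iIndepFun (fun t : ℕ × ℕ × ℕ => A t.1 t.2.1 t.2.2) ℙ →
      (∀ q i j, IdentDistrib (A q i j) (A q 0 0) ℙ ℙ) →
      (∀ q, ∫ ω, A q 0 0 ω ∂ℙ = 0) →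
      (∀ q < p, Integrable (fun ω => |A q 0 0 ω| ^ (2 * α)) ℙ) →
      ∀ i < n 0, ∀ j < n p,
        (∫ ω, |matProd n (fun q i j => A q i j ω) (p - 1) i j| ^ (2 * α) ∂ℙ) ≤
          C * (∏ q ∈ Finset.Ioo 0 p, (n q : ℝ)) ^ (max α 1) *
            ∏ q ∈ Finset.range p, ∫ ω, |A q 0 0 ω| ^ (2 * α) ∂ℙ := by
  set r := 2 * α with hrdef
  have hr : (1:ℝ) ≤ r := by rw [hrdef]; linarith
  refine ⟨ME.KK r ^ (p-1), ?_⟩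
  intro Ω _ _ n A hmeas hIndep hident hcent hint i _ j _
  set Mom : ℕ → ℝ := fun q => ∫ ω, |A q 0 0 ω| ^ r ∂ℙ with hMomdef
  have hMom0 : ∀ q, 0 ≤ Mom q := fun q =>
    integral_nonneg fun ω => Real.rpow_nonneg (abs_nonneg _) r
  have habsf : Measurable fun x : ℝ => |x| ^ r := measurable_abs.pow_const r
  have hILP : ∀ q x y, (∫ ω, |A q x y ω| ^ r ∂ℙ) = Mom q := by
    intro q x y
    have := ((hident q x y).comp habsf).integral_eq
    simpa [Function.comp, hMomdef] using this
  have hmemA : ∀ q, q < p → ∀ x y, MemLp (A q x y) (ENNReal.ofReal r) ℙ := by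
    intro q hq x y
    exact (hident q x y).symm.memLp_snd
      (ME.memℒp_of_integrable_abs_rpow hr (hmeas q 0 0) (hint q hq))
  have hzeroA : ∀ q x y, (∫ ω, A q x y ω ∂ℙ) = 0 := by
    intro q x y
    rw [(hident q x y).integral_eq]
    exact hcent q
  have hβr : max (r/2) 1 = max α 1 := by rw [hrdef]; norm_num
  have hPm : ∀ t i j, Measurable (fun ω => matProd n (fun q x y => A q x y ω) t i j) :=
    fun t i j => ME.matProd_measurable n (fun q x y ω => A q x y ω) hmeas t i j
  have main : ∀ t, t + 1 ≤ p → ∀ i j,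
      MemLp (fun ω => matProd n (fun q x y => A q x y ω) t i j) (ENNReal.ofReal r) ℙ ∧
      (∫ ω, |matProd n (fun q x y => A q x y ω) t i j| ^ r ∂ℙ)
        ≤ ME.KK r ^ t * (∏ q ∈ Finset.Ioo 0 (t+1), (n q : ℝ)) ^ (max α 1)
          * ∏ q ∈ Finset.range (t+1), Mom q := by
    intro t
    induction t with
    | zero =>
      intro h1 i j
      constructor
      · exact hmemA 0 (by omega) i j
      · have h2 : (∫ ω, |matProd n (fun q x y => A q x y ω) 0 i j| ^ r ∂ℙ) = Mom 0 :=
          hILP 0 i j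
        rw [h2]
        rw [show Finset.Ioo 0 1 = (∅ : Finset ℕ) by rw [← Finset.Ico_add_one_left_eq_Ioo]; exact Finset.Ico_self 1]
        simp [Real.one_rpow]
    | succ t ih =>
      intro h2 i k
      have h1 : t + 1 ≤ p := by omega
      have hcore := ME.core hr (n (t+1))
        (fun j ω => matProd n (fun q x y => A q x y ω) t i j)
        (fun j ω => A (t+1) j k ω)
        (fun j => hPm t i j) (fun j => hmeas (t+1) j k)
        (fun j _ => (ih h1 i j).1)
        (fun j _ => hmemA (t+1) (by omega) j k)
        (fun j _ => hzeroA (t+1) j k)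
        (fun j _ => ME.indep_helper n A hmeas hIndep t i k j)
        (ME.KK r ^ t * (∏ q ∈ Finset.Ioo 0 (t+1), (n q : ℝ)) ^ (max α 1)
          * (∏ q ∈ Finset.range (t+1), Mom q) * Mom (t+1))
        (fun j _ => by
          rw [hILP (t+1) j k]
          exact mul_le_mul_of_nonneg_right (ih h1 i j).2 (hMom0 (t+1)))
      rw [hβr] at hcore
      obtain ⟨hL, hI⟩ := hcore
      have hPsucc : ∀ ω, matProd n (fun q x y => A q x y ω) (t+1) i k
          = ∑ j ∈ Finset.range (n (t+1)),
              matProd n (fun q x y => A q x y ω) t i j * A (t+1) j k ω := fun ω => rfl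
      constructor
      · rw [show (fun ω => matProd n (fun q x y => A q x y ω) (t+1) i k)
            = fun ω => ∑ j ∈ Finset.range (n (t+1)),
              matProd n (fun q x y => A q x y ω) t i j * A (t+1) j k ω from funext hPsucc]
        exact hL
      · have hIoo : (∏ q ∈ Finset.Ioo 0 (t+1+1), (n q : ℝ))
            = (∏ q ∈ Finset.Ioo 0 (t+1), (n q : ℝ)) * (n (t+1) : ℝ) := by
          rw [← Finset.Ico_add_one_left_eq_Ioo, ← Finset.Ico_add_one_left_eq_Ioo]
          exact Finset.prod_Ico_succ_top (by omega) _
        have hprodnn : (0:ℝ) ≤ ∏ q ∈ Finset.Ioo 0 (t+1), (n q : ℝ) :=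
          Finset.prod_nonneg fun q _ => Nat.cast_nonneg _
        have hrpow : ((∏ q ∈ Finset.Ioo 0 (t+1+1), (n q : ℝ))) ^ (max α 1)
            = (∏ q ∈ Finset.Ioo 0 (t+1), (n q : ℝ)) ^ (max α 1) * ((n (t+1):ℝ)) ^ (max α 1) := by
          rw [hIoo, Real.mul_rpow hprodnn (Nat.cast_nonneg _)]
        have hrange : (∏ q ∈ Finset.range (t+1+1), Mom q)
            = (∏ q ∈ Finset.range (t+1), Mom q) * Mom (t+1) := Finset.prod_range_succ _ _
        simp only [hPsucc]
        calc (∫ ω, |∑ j ∈ Finset.range (n (t+1)),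
                matProd n (fun q x y => A q x y ω) t i j * A (t+1) j k ω| ^ r ∂ℙ)
            ≤ ME.KK r * (n (t+1):ℝ) ^ (max α 1) *
              (ME.KK r ^ t * (∏ q ∈ Finset.Ioo 0 (t+1), (n q : ℝ)) ^ (max α 1)
                * (∏ q ∈ Finset.range (t+1), Mom q) * Mom (t+1)) := hI
          _ = ME.KK r ^ (t+1) * (∏ q ∈ Finset.Ioo 0 (t+1+1), (n q : ℝ)) ^ (max α 1)
              * ∏ q ∈ Finset.range (t+1+1), Mom q := by
              rw [hrpow, hrange]
              ring
  obtain ⟨_, hfinal⟩ := main (p-1) (by omega) i j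
  rw [show p - 1 + 1 = p by omega] at hfinal
  exact hfinal
end

section
/- For every α ≥ 1 and integer p ≥ 1, there exists a constant C < ∞ (depending only on α and p) such that the following holds. Let A^(1) ∈ ℝ^{n₀×n₁}, …, A^(p) ∈ ℝ^{n_{p−1}×n_p} be independent families of i.i.d. centered random variables with unit variance and a finite moment of order 2α, and let P := A^(1) ⋯ A^(p) ∈ ℝ^{n₀×n_p}. Then for every j ∈ {1,…,n_p}, E[|Σ_{i=1}^{n₀} P_{ij}|^{2α}] ≤ C E[|A^(1)_{11}|^{2α}] ⋯ E[|A^(p)_{11}|^{2α}] (n₀ n₁ ⋯ n_{p−1})^α. -/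
open MeasureTheory ProbabilityTheory Finset

noncomputable def cMZ (r : ℝ) : ℝ := (3*r)^r + 2*r^2

lemma cMZ_ge_one {r : ℝ} (hr : 2 ≤ r) : 1 ≤ cMZ r := by
  have h1 : (1:ℝ) ≤ (3*r)^r := Real.one_le_rpow (by linarith) (by linarith)
  have : (0:ℝ) ≤ r^2 := sq_nonneg r
  unfold cMZ; nlinarith

lemma rpow_le_one_add_rpow {a p q : ℝ} (ha : 0 ≤ a) (hp : 0 ≤ p) (hpq : p ≤ q) :
    a ^ p ≤ 1 + a ^ q := by
  rcases le_total a 1 with h | h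
  · have h1 : a ^ p ≤ 1 := Real.rpow_le_one ha h hp
    have h2 : (0:ℝ) ≤ a ^ q := Real.rpow_nonneg ha q
    linarith
  · have h1 : a ^ p ≤ a ^ q := Real.rpow_le_rpow_of_exponent_le h hpq
    linarith

lemma taylor_one {r : ℝ} (hr : 2 ≤ r) (x : ℝ) :
    |1 + x| ^ r ≤ 1 + r * x + cMZ r * (x ^ 2 + |x| ^ r) := by
  have hr0 : (0:ℝ) < r := by linarith
  have hxa : (0:ℝ) ≤ |x| := abs_nonneg x
  rcases le_or_gt (1/(2*r)) |x| with hx | hx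
  · have h1 : |1 + x| ≤ 3 * r * |x| := by
      have ha : |1 + x| ≤ 1 + |x| := by
        calc |1 + x| ≤ |1| + |x| := abs_add_le 1 x
        _ = 1 + |x| := by rw [abs_one]
      have h2 : 1 ≤ 2 * r * |x| := by
        rw [div_le_iff₀ (by linarith : (0:ℝ) < 2*r)] at hx
        linarith
      nlinarith
    have h2 : |1 + x| ^ r ≤ (3*r) ^ r * |x| ^ r := by
      calc |1 + x| ^ r ≤ (3*r*|x|) ^ r :=
            Real.rpow_le_rpow (abs_nonneg _) h1 hr0.le
      _ = (3*r) ^ r * |x| ^ r := Real.mul_rpow (by positivity) hxa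
    have h3 : -(r*x) ≤ 2*r^2*x^2 := by
      have key : 1 ≤ 2 * r * |x| := by
        rw [div_le_iff₀ (by linarith : (0:ℝ) < 2*r)] at hx
        linarith
      have hax : r * |x| ≤ 2*r^2*x^2 := by
        have hsq : |x|^2 = x^2 := sq_abs x
        nlinarith [mul_nonneg hr0.le hxa]
      have : -(r*x) ≤ |r*x| := neg_le_abs _
      rw [abs_mul, abs_of_pos hr0] at this
      linarith
    have h5 : (0:ℝ) ≤ (3*r)^r := Real.rpow_nonneg (by linarith) r
    have h6 : (0:ℝ) ≤ |x| ^ r := Real.rpow_nonneg hxa r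
    unfold cMZ
    nlinarith [sq_nonneg x]
  · have hr4 : 1/(2*r) ≤ 1/4 := by
      rw [div_le_div_iff₀ (by linarith) (by norm_num)]; linarith
    have hx1 : (0:ℝ) < 1 + x := by
      have := neg_abs_le x
      have : -(1/4 : ℝ) ≤ x := by linarith
      linarith
    have habs : |1 + x| = 1 + x := abs_of_pos hx1
    have h1 : (1 + x) ≤ Real.exp x := by
      have := Real.add_one_le_exp x; linarith
    have h2 : |1 + x| ^ r ≤ Real.exp x ^ r := by
      rw [habs]; exact Real.rpow_le_rpow hx1.le h1 hr0.le
    have h3 : Real.exp x ^ r = Real.exp (x * r) := by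
      rw [← Real.exp_mul]
    have h4 : |r * x| ≤ 1 := by
      rw [abs_mul, abs_of_pos hr0]
      have : r * |x| < r * (1/(2*r)) := by
        apply mul_lt_mul_of_pos_left hx hr0
      have hrr : r * (1/(2*r)) = 1/2 := by field_simp
      linarith
    have hb := Real.exp_bound (x := r*x) h4 (n := 2) (by norm_num)
    have hsum : ∑ i ∈ Finset.range 2, (r*x) ^ i / (Nat.factorial i : ℝ) = 1 + r * x := by
      simp [Finset.sum_range_succ, Nat.factorial]
    rw [hsum] at hb
    have hb2 : Real.exp (r*x) ≤ 1 + r*x + 3/4*(r^2*x^2) := by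
      have h9 := (abs_le.mp hb).2
      have h10 : |r*x|^2 = r^2*x^2 := by rw [sq_abs]; ring
      have h11 : ((Nat.succ 2 : ℕ) : ℝ) / (((Nat.factorial 2 : ℕ) : ℝ) * ((2:ℕ) : ℝ)) = 3/4 := by
        norm_num [Nat.factorial]
      rw [h10, h11] at h9
      linarith
    have h5 : (0:ℝ) ≤ (3*r)^r := Real.rpow_nonneg (by linarith) r
    have h6 : (0:ℝ) ≤ |x| ^ r := Real.rpow_nonneg hxa r
    have h7 : |1 + x| ^ r ≤ 1 + r*x + 3/4*(r^2*x^2) := by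
      rw [mul_comm x r] at h3
      calc |1 + x| ^ r ≤ Real.exp x ^ r := h2
      _ = Real.exp (r * x) := h3
      _ ≤ 1 + r*x + 3/4*(r^2*x^2) := hb2
    unfold cMZ
    nlinarith [sq_nonneg x, mul_nonneg h5 h6, sq_nonneg r, sq_nonneg (r*x),
      mul_nonneg h5 (sq_nonneg x)]

lemma taylor_rpow_pos {r : ℝ} (hr : 2 ≤ r) {s : ℝ} (hs : 0 < s) (x : ℝ) :
    |s + x| ^ r ≤ |s| ^ r + r * (|s| ^ (r-2) * s * x)
      + cMZ r * (|s| ^ (r-2) * x ^ 2 + |x| ^ r) := by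
  have hs0 : s ≠ 0 := hs.ne'
  set u := x / s with hu
  have hsu : s * u = x := by rw [hu, mul_comm]; exact div_mul_cancel₀ x hs0
  have habs : |s| = s := abs_of_pos hs
  have e1 : s ^ (r-2) * s * s = s ^ r := by
    have h1 : s ^ ((r-2)+1) = s ^ (r-2) * s := Real.rpow_add_one hs0 (r-2)
    have h2 : s ^ (((r-2)+1)+1) = s ^ ((r-2)+1) * s := Real.rpow_add_one hs0 _
    have h3 : ((r-2)+1)+1 = r := by ring
    rw [h3] at h2
    rw [h2, h1]
  have key := taylor_one hr u
  have hmul := mul_le_mul_of_nonneg_left key (Real.rpow_nonneg hs.le r : (0:ℝ) ≤ s ^ r)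
  have l1 : s ^ r * |1 + u| ^ r = |s + x| ^ r := by
    rw [← Real.mul_rpow hs.le (abs_nonneg _), ← abs_of_pos hs, ← abs_mul, abs_of_pos hs]
    congr 2
    rw [mul_add, mul_one, hsu]
  have e2 : s ^ r * u = s ^ (r-2) * s * x := by rw [← hsu, ← e1]; ring
  have e3 : s ^ r * u^2 = s ^ (r-2) * x^2 := by rw [← hsu, ← e1]; ring
  have e4 : s ^ r * |u| ^ r = |x| ^ r := by
    rw [← Real.mul_rpow hs.le (abs_nonneg u)]
    congr 1
    rw [← abs_of_pos hs, ← abs_mul, hsu]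
  calc |s + x| ^ r = s ^ r * |1 + u| ^ r := l1.symm
  _ ≤ s ^ r * (1 + r * u + cMZ r * (u ^ 2 + |u| ^ r)) := hmul
  _ = s ^ r + r * (s ^ r * u) + cMZ r * (s ^ r * u^2 + s ^ r * |u| ^ r) := by ring
  _ = |s| ^ r + r * (|s| ^ (r-2) * s * x) + cMZ r * (|s| ^ (r-2) * x ^ 2 + |x| ^ r) := by
      rw [e2, e3, e4, habs]

lemma taylor_rpow {r : ℝ} (hr : 2 ≤ r) (s x : ℝ) :
    |s + x| ^ r ≤ |s| ^ r + r * (|s| ^ (r-2) * s * x)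
      + cMZ r * (|s| ^ (r-2) * x ^ 2 + |x| ^ r) := by
  rcases lt_trichotomy s 0 with h | h | h
  · have hthis := taylor_rpow_pos hr (neg_pos.mpr h) (-x)
    have h1 : (-s) + (-x) = -(s+x) := by ring
    rw [h1, abs_neg, abs_neg] at hthis
    have h2 : |(-x)| = |x| := abs_neg x
    rw [h2] at hthis
    calc |s + x| ^ r ≤ |s| ^ r + r * (|s| ^ (r-2) * (-s) * (-x))
        + cMZ r * (|s| ^ (r-2) * (-x) ^ 2 + |x| ^ r) := hthis
    _ = |s| ^ r + r * (|s| ^ (r-2) * s * x) + cMZ r * (|s| ^ (r-2) * x ^ 2 + |x| ^ r) := by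
        ring
  · subst h
    have hz : (0:ℝ) ^ r = 0 := Real.zero_rpow (by linarith)
    have h1 : (0:ℝ) ≤ (0:ℝ) ^ (r-2) := Real.rpow_nonneg le_rfl _
    have h2 : (0:ℝ) ≤ |x| ^ r := Real.rpow_nonneg (abs_nonneg x) r
    have hc := cMZ_ge_one hr
    have h3 : |0 + x| ^ r = |x| ^ r := by rw [zero_add]
    rw [h3, abs_zero, hz]
    nlinarith [mul_nonneg h1 (sq_nonneg x)]
  · exact taylor_rpow_pos hr h x

lemma meas_rpow {β : Type*} [MeasurableSpace β] {f : β → ℝ} (hf : Measurable f) {q : ℝ}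
    (hq : 0 ≤ q) : Measurable fun ω => f ω ^ q :=
  (Real.continuous_rpow_const hq).measurable.comp hf

section Jensen
variable {Ω : Type} [MeasureSpace Ω] [IsProbabilityMeasure (ℙ : Measure Ω)]

lemma integrable_rpow_of_le_one {θ : ℝ} (hθ0 : 0 ≤ θ) (hθ1 : θ ≤ 1) {g : Ω → ℝ}
    (hgm : Measurable g) (hg0 : ∀ ω, 0 ≤ g ω) (hgint : Integrable g ℙ) :
    Integrable (fun ω => (g ω) ^ θ) ℙ := by
  refine Integrable.mono ((integrable_const (1:ℝ)).add hgint) ((meas_rpow hgm hθ0).aestronglyMeasurable) ?_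
  filter_upwards with ω
  rw [Real.norm_eq_abs, Real.norm_eq_abs, abs_of_nonneg (Real.rpow_nonneg (hg0 ω) θ)]
  have h := rpow_le_one_add_rpow (hg0 ω) hθ0 hθ1
  rw [Real.rpow_one] at h
  exact h.trans (le_abs_self _)

lemma integral_rpow_le {θ : ℝ} (hθ0 : 0 ≤ θ) (hθ1 : θ ≤ 1) {g : Ω → ℝ}
    (hgm : Measurable g) (hg0 : ∀ ω, 0 ≤ g ω) (hgint : Integrable g ℙ) :
    ∫ ω, (g ω) ^ θ ∂ℙ ≤ (∫ ω, g ω ∂ℙ) ^ θ := by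
  rcases eq_or_lt_of_le hθ0 with rfl | hθpos
  · simp
  have hK0 : 0 ≤ ∫ ω, g ω ∂ℙ := integral_nonneg hg0
  rcases eq_or_lt_of_le hK0 with hK | hKpos
  · have hg_ae : g =ᵐ[ℙ] 0 := by
      rw [← integral_eq_zero_iff_of_nonneg hg0 hgint]; exact hK.symm
    have h1 : (fun ω => (g ω) ^ θ) =ᵐ[ℙ] 0 := by
      filter_upwards [hg_ae] with ω hω
      simp only [Pi.zero_apply] at hω ⊢
      rw [hω, Real.zero_rpow hθpos.ne']
    rw [integral_congr_ae h1]
    simp [← hK, Real.zero_rpow hθpos.ne']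
  · set K := ∫ ω, g ω ∂ℙ with hKdef
    have hpt : ∀ ω, (g ω) ^ θ * K ^ (1-θ) ≤ θ * g ω + (1-θ) * K := fun ω =>
      Real.geom_mean_le_arith_mean2_weighted hθ0 (by linarith) (hg0 ω) hK0 (by ring)
    have hint1 : Integrable (fun ω => (g ω) ^ θ) ℙ :=
      integrable_rpow_of_le_one hθ0 hθ1 hgm hg0 hgint
    have hmono := integral_mono (hint1.mul_const (K ^ (1-θ)))
      ((hgint.const_mul θ).add (integrable_const ((1-θ)*K))) hpt
    simp only [Pi.add_apply] at hmono
    rw [integral_mul_const] at hmono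
    have hrhs : ∫ ω, (θ * g ω + (1-θ)*K) ∂ℙ = K := by
      rw [integral_add (hgint.const_mul θ) (integrable_const _), integral_const_mul,
        integral_const]
      simp [← hKdef]
      ring
    rw [hrhs] at hmono
    have hsplit : K = K ^ θ * K ^ (1-θ) := by
      rw [← Real.rpow_add hKpos]
      norm_num
    exact le_of_mul_le_mul_right (hmono.trans_eq hsplit) (Real.rpow_pos_of_pos hKpos _)

end Jensen

lemma sum_rpow_le {ι : Type*} (s : Finset ι) (b : ι → ℝ) (hb : ∀ i ∈ s, 0 ≤ b i)
    {p : ℝ} (hp : 1 ≤ p) :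
    (∑ i ∈ s, b i) ^ p ≤ (s.card : ℝ) ^ (p - 1) * ∑ i ∈ s, (b i) ^ p := by
  rcases Finset.eq_empty_or_nonempty s with rfl | hne
  · simp [Real.zero_rpow (by linarith : p ≠ 0)]
  · have hN : (0:ℝ) < (s.card : ℝ) := by exact_mod_cast Finset.card_pos.mpr hne
    have hsum0 : 0 ≤ ∑ i ∈ s, b i := Finset.sum_nonneg hb
    have h := Real.rpow_arith_mean_le_arith_mean_rpow s (fun _ => 1/(s.card : ℝ)) b
      (fun i _ => by positivity) (by rw [Finset.sum_const, nsmul_eq_mul]; field_simp) hb hp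
    rw [← Finset.mul_sum] at h
    rw [Real.mul_rpow (by positivity) hsum0] at h
    rw [← Finset.mul_sum] at h
    have h2 := mul_le_mul_of_nonneg_left h (le_of_lt (Real.rpow_pos_of_pos hN p))
    rw [← mul_assoc, ← mul_assoc, ← Real.mul_rpow hN.le (by positivity)] at h2
    rw [mul_one_div_cancel hN.ne', Real.one_rpow, one_mul] at h2
    calc (∑ i ∈ s, b i) ^ p ≤ (s.card : ℝ) ^ p * (1/(s.card : ℝ)) * ∑ i ∈ s, (b i) ^ p := by
          exact h2
    _ = (s.card : ℝ) ^ (p - 1) * ∑ i ∈ s, (b i) ^ p := by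
          rw [Real.rpow_sub hN, Real.rpow_one]; ring

lemma rpow_superadd {p : ℝ} (hp : 1 ≤ p) {x y : ℝ} (hx : 0 ≤ x) (hy : 0 ≤ y) :
    x ^ p + y ^ p ≤ (x + y) ^ p ∧ x ^ (p-1) * y + x ^ p ≤ (x + y) ^ p := by
  have hp0 : (0:ℝ) < p := by linarith
  have hxy : 0 ≤ x + y := by linarith
  have hmulself : ∀ z : ℝ, 0 ≤ z → z ^ (p-1) * z = z ^ p := by
    intro z hz
    rcases eq_or_lt_of_le hz with rfl | hzpos
    · rw [Real.zero_rpow hp0.ne', mul_zero]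
    · rw [← Real.rpow_add_one hzpos.ne' (p-1)]
      norm_num
  rcases eq_or_lt_of_le hxy with h0 | hpos
  · have hx0 : x = 0 := by linarith
    have hy0 : y = 0 := by linarith
    subst hx0; subst hy0
    simp [Real.zero_rpow hp0.ne']
  · have e1 : (x + y) ^ p = (x + y) ^ (p-1) * (x + y) := by
      rw [← Real.rpow_add_one hpos.ne' (p-1)]
      norm_num
    have hxp : x ^ (p-1) ≤ (x + y) ^ (p-1) :=
      Real.rpow_le_rpow hx (by linarith) (by linarith)
    have hyp : y ^ (p-1) ≤ (x + y) ^ (p-1) :=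
      Real.rpow_le_rpow hy (by linarith) (by linarith)
    constructor
    · calc x ^ p + y ^ p = x ^ (p-1) * x + y ^ (p-1) * y := by
            rw [hmulself x hx, hmulself y hy]
      _ ≤ (x+y) ^ (p-1) * x + (x+y) ^ (p-1) * y :=
            add_le_add (mul_le_mul_of_nonneg_right hxp hx) (mul_le_mul_of_nonneg_right hyp hy)
      _ = (x + y) ^ p := by rw [e1]; ring
    · calc x ^ (p-1) * y + x ^ p = x ^ (p-1) * y + x ^ (p-1) * x := by rw [hmulself x hx]
      _ ≤ (x+y) ^ (p-1) * y + (x+y) ^ (p-1) * x :=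
            add_le_add (mul_le_mul_of_nonneg_right hxp hy) (mul_le_mul_of_nonneg_right hxp hx)
      _ = (x + y) ^ p := by rw [e1]; ring

lemma mz_arith {r : ℝ} (hr : 2 ≤ r) {c m σ2 a : ℝ} (hc : 1 ≤ c) (hm : 1 ≤ m)
    (hσ : 0 ≤ σ2) (ha0 : 0 ≤ a) (t : ℝ)
    (ha : a ≤ (2*c) ^ (r/2) * m * σ2 ^ (r/2)) :
    a + c * (t^2 * a ^ ((r-2)/r) + |t| ^ r * m) ≤ (2*c) ^ (r/2) * m * (σ2 + t^2) ^ (r/2) := by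
  have hr0 : (0:ℝ) < r := by linarith
  set p := r/2 with hp
  set θ := (r-2)/r with hθ
  have hp1 : 1 ≤ p := by rw [hp]; linarith
  have hθ0 : 0 ≤ θ := by rw [hθ]; exact div_nonneg (by linarith) hr0.le
  have hθ1 : θ ≤ 1 := by
    rw [hθ, div_le_one hr0]; linarith
  have h2c : (1:ℝ) ≤ 2*c := by linarith
  have h2c0 : (0:ℝ) < 2*c := by linarith
  set K := (2*c) ^ p with hK
  have hK1 : (1:ℝ) ≤ K := Real.one_le_rpow h2c (by linarith)
  have hKθ : c * K ^ θ = K / 2 := by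
    rw [hK, ← Real.rpow_mul h2c0.le]
    have hpθ : p * θ = p - 1 := by
      rw [hp, hθ]; field_simp
    rw [hpθ]
    have : (2*c) ^ p = (2*c) ^ (p-1) * (2*c) := by
      rw [← Real.rpow_add_one h2c0.ne' (p-1)]; norm_num
    rw [this]; ring
  have hcK : c ≤ K / 2 := by
    have : (2*c) ^ (1:ℝ) ≤ (2*c) ^ p := Real.rpow_le_rpow_of_exponent_le h2c hp1
    rw [Real.rpow_one] at this
    rw [hK]; linarith
  have htr : |t| ^ r = (t^2) ^ p := by
    have h1 : t^2 = |t| ^ (2:ℝ) := by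
      rw [Real.rpow_two, sq_abs]
    rw [h1, ← Real.rpow_mul (abs_nonneg t)]
    congr 1
    rw [hp]; ring
  -- bound on a^θ
  have haθ : a ^ θ ≤ K ^ θ * m * σ2 ^ (p - 1) := by
    have h1 : a ^ θ ≤ (K * m * σ2 ^ p) ^ θ := Real.rpow_le_rpow ha0 ha hθ0
    have h2 : (K * m * σ2 ^ p) ^ θ = K ^ θ * m ^ θ * (σ2 ^ p) ^ θ := by
      rw [Real.mul_rpow (by positivity) (Real.rpow_nonneg hσ p),
        Real.mul_rpow (by positivity) (by linarith)]
    have h3 : (σ2 ^ p) ^ θ = σ2 ^ (p - 1) := by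
      rw [← Real.rpow_mul hσ]
      congr 1
      rw [hp, hθ]; field_simp
    have h4 : m ^ θ ≤ m := by
      have := Real.rpow_le_rpow_of_exponent_le hm hθ1
      rwa [Real.rpow_one] at this
    calc a ^ θ ≤ K ^ θ * m ^ θ * (σ2 ^ p) ^ θ := by rw [← h2]; exact h1
    _ = K ^ θ * m ^ θ * σ2 ^ (p-1) := by rw [h3]
    _ ≤ K ^ θ * m * σ2 ^ (p-1) := by
        have hKθ0 : 0 ≤ K ^ θ := Real.rpow_nonneg (by linarith) θ
        have hσ0 : 0 ≤ σ2 ^ (p-1) := Real.rpow_nonneg hσ _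
        nlinarith [mul_nonneg hKθ0 hσ0, h4]
  have hsup := rpow_superadd hp1 hσ (sq_nonneg t)
  have havg : σ2 ^ p + (1/2) * (σ2 ^ (p-1) * t^2 + (t^2) ^ p) ≤ (σ2 + t^2) ^ p := by
    have h1 := hsup.1
    have h2 := hsup.2
    linarith
  -- assemble
  have A1 : c * (t^2 * a ^ θ) ≤ (K/2) * (m * (σ2 ^ (p-1) * t^2)) := by
    have h1 : t^2 * a ^ θ ≤ t^2 * (K ^ θ * m * σ2 ^ (p-1)) :=
      mul_le_mul_of_nonneg_left haθ (sq_nonneg t)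
    calc c * (t^2 * a ^ θ) ≤ c * (t^2 * (K ^ θ * m * σ2 ^ (p-1))) :=
          mul_le_mul_of_nonneg_left h1 (by linarith)
    _ = (c * K ^ θ) * (m * (σ2 ^ (p-1) * t^2)) := by ring
    _ = (K/2) * (m * (σ2 ^ (p-1) * t^2)) := by rw [hKθ]
  have A2 : c * (|t| ^ r * m) ≤ (K/2) * (m * (t^2) ^ p) := by
    rw [htr]
    have h0 : 0 ≤ (t^2) ^ p * m := mul_nonneg (Real.rpow_nonneg (sq_nonneg t) p) (by linarith)
    calc c * ((t^2) ^ p * m) ≤ (K/2) * ((t^2) ^ p * m) :=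
          mul_le_mul_of_nonneg_right hcK h0
    _ = (K/2) * (m * (t^2) ^ p) := by ring
  have hKm0 : 0 ≤ K * m := by nlinarith
  calc a + c * (t^2 * a ^ θ + |t| ^ r * m)
      = a + c * (t^2 * a ^ θ) + c * (|t| ^ r * m) := by ring
  _ ≤ K * m * σ2 ^ p + (K/2) * (m * (σ2 ^ (p-1) * t^2)) + (K/2) * (m * (t^2) ^ p) := by
      linarith
  _ = K * m * (σ2 ^ p + (1/2) * (σ2 ^ (p-1) * t^2 + (t^2) ^ p)) := by ring
  _ ≤ K * m * (σ2 + t^2) ^ p := mul_le_mul_of_nonneg_left havg hKm0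

lemma rpow_mul_self {z q : ℝ} (hz : 0 ≤ z) (hq : q + 1 ≠ 0) : z ^ q * z = z ^ (q+1) := by
  rcases eq_or_lt_of_le hz with rfl | hzpos
  · rw [mul_zero, Real.zero_rpow hq]
  · rw [Real.rpow_add_one hzpos.ne' q]

lemma add_rpow_le_two_rpow {a b r : ℝ} (ha : 0 ≤ a) (hb : 0 ≤ b) (hr : 0 ≤ r) :
    (a + b) ^ r ≤ 2 ^ r * (a ^ r + b ^ r) := by
  rcases le_total a b with h | h
  · calc (a + b) ^ r ≤ (2 * b) ^ r := Real.rpow_le_rpow (by linarith) (by linarith) hr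
    _ = 2 ^ r * b ^ r := Real.mul_rpow (by norm_num) hb
    _ ≤ 2 ^ r * (a ^ r + b ^ r) := by
        have h1 : (0:ℝ) ≤ a ^ r := Real.rpow_nonneg ha r
        have h2 : (0:ℝ) ≤ (2:ℝ) ^ r := Real.rpow_nonneg (by norm_num) r
        nlinarith
  · calc (a + b) ^ r ≤ (2 * a) ^ r := Real.rpow_le_rpow (by linarith) (by linarith) hr
    _ = 2 ^ r * a ^ r := Real.mul_rpow (by norm_num) ha
    _ ≤ 2 ^ r * (a ^ r + b ^ r) := by
        have h1 : (0:ℝ) ≤ b ^ r := Real.rpow_nonneg hb r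
        have h2 : (0:ℝ) ≤ (2:ℝ) ^ r := Real.rpow_nonneg (by norm_num) r
        nlinarith

section P
variable {Ω : Type} [MeasureSpace Ω] [IsProbabilityMeasure (ℙ : Measure Ω)]

lemma step_lemma {r : ℝ} (hr : 2 ≤ r) {S X : Ω → ℝ} (hSm : Measurable S) (hXm : Measurable X)
    (hindep : IndepFun S X ℙ) (hSint : Integrable (fun ω => |S ω| ^ r) ℙ)
    (hXmean : ∫ ω, X ω ∂ℙ = 0) (hXvar : ∫ ω, (X ω)^2 ∂ℙ = 1)
    (hXint : Integrable (fun ω => |X ω| ^ r) ℙ) (t : ℝ) :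
    Integrable (fun ω => |S ω + t * X ω| ^ r) ℙ ∧
    ∫ ω, |S ω + t * X ω| ^ r ∂ℙ ≤
      (∫ ω, |S ω| ^ r ∂ℙ) + cMZ r * (t^2 * ∫ ω, |S ω| ^ (r-2) ∂ℙ
        + |t| ^ r * ∫ ω, |X ω| ^ r ∂ℙ) := by
  have hr0 : (0:ℝ) < r := by linarith
  have hr2 : (0:ℝ) ≤ r - 2 := by linarith
  have hX2int : Integrable (fun ω => (X ω)^2) ℙ := by
    refine Integrable.mono ((integrable_const (1:ℝ)).add hXint)
      ((hXm.pow_const 2).aestronglyMeasurable) ?_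
    filter_upwards with ω
    simp only [Pi.add_apply]
    have h := rpow_le_one_add_rpow (abs_nonneg (X ω)) (by norm_num : (0:ℝ) ≤ 2) hr
    rw [Real.rpow_two, sq_abs] at h
    rw [Real.norm_eq_abs, Real.norm_eq_abs, abs_of_nonneg (sq_nonneg (X ω))]
    exact h.trans (le_abs_self _)
  have hXint1 : Integrable X ℙ := by
    refine Integrable.mono ((integrable_const (1:ℝ)).add hXint) hXm.aestronglyMeasurable ?_
    filter_upwards with ω
    simp only [Pi.add_apply]
    have h := rpow_le_one_add_rpow (q := r) (abs_nonneg (X ω)) (by norm_num : (0:ℝ) ≤ 1) (by linarith)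
    rw [Real.rpow_one] at h
    rw [Real.norm_eq_abs, Real.norm_eq_abs]
    exact h.trans (le_abs_self _)
  have hSr2 : Integrable (fun ω => |S ω| ^ (r-2)) ℙ := by
    refine Integrable.mono ((integrable_const (1:ℝ)).add hSint)
      ((meas_rpow hSm.abs hr2).aestronglyMeasurable) ?_
    filter_upwards with ω
    simp only [Pi.add_apply]
    have h := rpow_le_one_add_rpow (abs_nonneg (S ω)) hr2 (by linarith : r - 2 ≤ r)
    rw [Real.norm_eq_abs, Real.norm_eq_abs,
      abs_of_nonneg (Real.rpow_nonneg (abs_nonneg _) _)]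
    exact h.trans (le_abs_self _)
  have hSr1 : Integrable (fun ω => |S ω| ^ (r-2) * S ω) ℙ := by
    refine Integrable.mono ((integrable_const (1:ℝ)).add hSint)
      (((meas_rpow hSm.abs hr2).mul hSm).aestronglyMeasurable) ?_
    filter_upwards with ω
    simp only [Pi.add_apply]
    have habs : |(|S ω| ^ (r-2) * S ω)| = |S ω| ^ (r-2+1) := by
      rw [abs_mul, abs_of_nonneg (Real.rpow_nonneg (abs_nonneg _) _)]
      exact rpow_mul_self (abs_nonneg (S ω)) (by linarith : r - 2 + 1 ≠ 0)
    have h := rpow_le_one_add_rpow (abs_nonneg (S ω)) (by linarith : (0:ℝ) ≤ r - 2 + 1)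
      (by linarith : r - 2 + 1 ≤ r)
    rw [Real.norm_eq_abs, Real.norm_eq_abs, habs]
    exact h.trans (le_abs_self _)
  have hi1 : IndepFun (fun ω => |S ω| ^ (r-2) * S ω) X ℙ := by
    have h := hindep.comp (φ := fun s : ℝ => |s| ^ (r-2) * s) (ψ := id)
      ((meas_rpow measurable_abs hr2).mul measurable_id) measurable_id
    exact h
  have hi2 : IndepFun (fun ω => |S ω| ^ (r-2)) (fun ω => (X ω)^2) ℙ := by
    have h := hindep.comp (φ := fun s : ℝ => |s| ^ (r-2)) (ψ := fun x : ℝ => x^2)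
      (meas_rpow measurable_abs hr2) (measurable_id.pow_const 2)
    exact h
  have hP1 : Integrable (fun ω => (|S ω| ^ (r-2) * S ω) * X ω) ℙ := by
    have h := hi1.integrable_mul hSr1 hXint1
    exact h
  have hP2 : Integrable (fun ω => |S ω| ^ (r-2) * (X ω)^2) ℙ := by
    have h := hi2.integrable_mul hSr2 hX2int
    exact h
  have hLm : Measurable (fun ω => |S ω + t * X ω| ^ r) :=
    meas_rpow (hSm.add ((hXm.const_mul t))).abs hr0.le
  have hLint : Integrable (fun ω => |S ω + t * X ω| ^ r) ℙ := by
    refine Integrable.mono ((hSint.add (hXint.const_mul (|t| ^ r))).const_mul (2 ^ r))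
      hLm.aestronglyMeasurable ?_
    filter_upwards with ω
    simp only [Pi.add_apply]
    rw [Real.norm_eq_abs, Real.norm_eq_abs,
      abs_of_nonneg (Real.rpow_nonneg (abs_nonneg _) _)]
    have h1 : |S ω + t * X ω| ≤ |S ω| + |t| * |X ω| := by
      calc |S ω + t * X ω| ≤ |S ω| + |t * X ω| := abs_add_le _ _
      _ = |S ω| + |t| * |X ω| := by rw [abs_mul]
    have h2 : |S ω + t * X ω| ^ r ≤ (|S ω| + |t| * |X ω|) ^ r :=
      Real.rpow_le_rpow (abs_nonneg _) h1 hr0.le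
    have h3 : (|S ω| + |t| * |X ω|) ^ r ≤ 2 ^ r * (|S ω| ^ r + (|t| * |X ω|) ^ r) :=
      add_rpow_le_two_rpow (abs_nonneg _) (by positivity) hr0.le
    have h4 : (|t| * |X ω|) ^ r = |t| ^ r * |X ω| ^ r :=
      Real.mul_rpow (abs_nonneg t) (abs_nonneg _)
    rw [h4] at h3
    exact (h2.trans h3).trans (le_abs_self _)
  refine ⟨hLint, ?_⟩
  have hpt : ∀ ω, |S ω + t * X ω| ^ r ≤ |S ω| ^ r
      + (r * t) * ((|S ω| ^ (r-2) * S ω) * X ω)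
      + (cMZ r * t^2) * (|S ω| ^ (r-2) * (X ω)^2)
      + (cMZ r * |t| ^ r) * |X ω| ^ r := by
    intro ω
    have h := taylor_rpow hr (S ω) (t * X ω)
    have h4 : |t * X ω| ^ r = |t| ^ r * |X ω| ^ r := by
      rw [abs_mul]; exact Real.mul_rpow (abs_nonneg t) (abs_nonneg _)
    rw [h4] at h
    calc |S ω + t * X ω| ^ r ≤ |S ω| ^ r + r * (|S ω| ^ (r-2) * S ω * (t * X ω))
        + cMZ r * (|S ω| ^ (r-2) * (t * X ω) ^ 2 + |t| ^ r * |X ω| ^ r) := h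
    _ = |S ω| ^ r + (r * t) * ((|S ω| ^ (r-2) * S ω) * X ω)
        + (cMZ r * t^2) * (|S ω| ^ (r-2) * (X ω)^2)
        + (cMZ r * |t| ^ r) * |X ω| ^ r := by ring
  have hRint : Integrable (fun ω => |S ω| ^ r
      + (r * t) * ((|S ω| ^ (r-2) * S ω) * X ω)
      + (cMZ r * t^2) * (|S ω| ^ (r-2) * (X ω)^2)
      + (cMZ r * |t| ^ r) * |X ω| ^ r) ℙ :=
    ((hSint.add (hP1.const_mul _)).add (hP2.const_mul _)).add (hXint.const_mul _)
  have hmono := integral_mono hLint hRint hpt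
  have hI1 : ∫ ω, (|S ω| ^ (r-2) * S ω) * X ω ∂ℙ = 0 := by
    rw [hi1.integral_fun_mul_eq_mul_integral hSr1.aestronglyMeasurable hXint1.aestronglyMeasurable, hXmean,
      mul_zero]
  have hI2 : ∫ ω, |S ω| ^ (r-2) * (X ω)^2 ∂ℙ = ∫ ω, |S ω| ^ (r-2) ∂ℙ := by
    rw [hi2.integral_fun_mul_eq_mul_integral hSr2.aestronglyMeasurable hX2int.aestronglyMeasurable, hXvar,
      mul_one]
  have hsplit : ∫ ω, (|S ω| ^ r
      + (r * t) * ((|S ω| ^ (r-2) * S ω) * X ω)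
      + (cMZ r * t^2) * (|S ω| ^ (r-2) * (X ω)^2)
      + (cMZ r * |t| ^ r) * |X ω| ^ r) ∂ℙ
      = (∫ ω, |S ω| ^ r ∂ℙ)
      + (r * t) * ∫ ω, (|S ω| ^ (r-2) * S ω) * X ω ∂ℙ
      + (cMZ r * t^2) * ∫ ω, |S ω| ^ (r-2) * (X ω)^2 ∂ℙ
      + (cMZ r * |t| ^ r) * ∫ ω, |X ω| ^ r ∂ℙ := by
    have hA : Integrable (fun ω => |S ω| ^ r
        + (r * t) * ((|S ω| ^ (r-2) * S ω) * X ω)) ℙ := by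
      exact hSint.add (hP1.const_mul _)
    have hB : Integrable (fun ω => |S ω| ^ r
        + (r * t) * ((|S ω| ^ (r-2) * S ω) * X ω)
        + (cMZ r * t^2) * (|S ω| ^ (r-2) * (X ω)^2)) ℙ := by
      exact hA.add (hP2.const_mul _)
    rw [integral_add hB (by exact hXint.const_mul _),
      integral_add hA (by exact hP2.const_mul _),
      integral_add hSint (by exact hP1.const_mul _),
      integral_const_mul, integral_const_mul, integral_const_mul]
  rw [hsplit, hI1, hI2, mul_zero] at hmono
  calc ∫ ω, |S ω + t * X ω| ^ r ∂ℙ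
      ≤ (∫ ω, |S ω| ^ r ∂ℙ) + 0 + (cMZ r * t^2) * ∫ ω, |S ω| ^ (r-2) ∂ℙ
        + (cMZ r * |t| ^ r) * ∫ ω, |X ω| ^ r ∂ℙ := hmono
  _ = (∫ ω, |S ω| ^ r ∂ℙ) + cMZ r * (t^2 * ∫ ω, |S ω| ^ (r-2) ∂ℙ
        + |t| ^ r * ∫ ω, |X ω| ^ r ∂ℙ) := by ring

end P


section Psec
variable {Ω : Type} [MeasureSpace Ω] [IsProbabilityMeasure (ℙ : Measure Ω)]

/-- A variable with unit variance and finite `r`-th absolute moment has `r`-th moment `≥ 1`. -/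
lemma moment_ge_one {r : ℝ} (hr : 2 ≤ r) {X : Ω → ℝ} (hXm : Measurable X)
    (hXvar : ∫ ω, (X ω)^2 ∂ℙ = 1) (hXint : Integrable (fun ω => |X ω| ^ r) ℙ) :
    1 ≤ ∫ ω, |X ω| ^ r ∂ℙ := by
  have hr0 : (0:ℝ) < r := by linarith
  have hpt : ∀ ω, (X ω)^2 = (|X ω| ^ r) ^ (2/r) := by
    intro ω
    rw [← Real.rpow_mul (abs_nonneg (X ω))]
    have h2 : r * (2/r) = 2 := by field_simp
    rw [h2, Real.rpow_two, sq_abs]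
  have h1 : ∫ ω, (X ω)^2 ∂ℙ = ∫ ω, (|X ω| ^ r) ^ (2/r) ∂ℙ := by
    congr 1; funext ω; exact hpt ω
  have h2 : ∫ ω, (|X ω| ^ r) ^ (2/r) ∂ℙ ≤ (∫ ω, |X ω| ^ r ∂ℙ) ^ (2/r) :=
    integral_rpow_le (div_nonneg (by norm_num) hr0.le) (by rw [div_le_one hr0]; linarith)
      (meas_rpow hXm.abs hr0.le) (fun ω => Real.rpow_nonneg (abs_nonneg _) r) hXint
  have h3 : (1:ℝ) ≤ (∫ ω, |X ω| ^ r ∂ℙ) ^ (2/r) := by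
    rw [hXvar] at h1; linarith
  by_contra hcon
  push_neg at hcon
  have h4 : (∫ ω, |X ω| ^ r ∂ℙ) ^ (2/r) < 1 :=
    Real.rpow_lt_one (integral_nonneg (fun ω => Real.rpow_nonneg (abs_nonneg _) r)) hcon
      (div_pos (by norm_num) hr0)
  linarith

/-- Marcinkiewicz-Zygmund / Rosenthal type bound for weighted sums of independent centered
variables, by induction. -/
lemma mz_sum {r : ℝ} (hr : 2 ≤ r) {X : ℕ → Ω → ℝ} (hXm : ∀ l, Measurable (X l))
    (hindep : iIndepFun X ℙ)
    (hmean : ∀ l, ∫ ω, X l ω ∂ℙ = 0) (hvar : ∀ l, ∫ ω, (X l ω)^2 ∂ℙ = 1)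
    {m : ℝ} (hXint : ∀ l, Integrable (fun ω => |X l ω| ^ r) ℙ)
    (hmle : ∀ l, ∫ ω, |X l ω| ^ r ∂ℙ ≤ m) (hm1 : 1 ≤ m) (t : ℕ → ℝ) (k : ℕ) :
    Integrable (fun ω => |∑ l ∈ Finset.range k, t l * X l ω| ^ r) ℙ ∧
    ∫ ω, |∑ l ∈ Finset.range k, t l * X l ω| ^ r ∂ℙ ≤
      (2 * cMZ r) ^ (r/2) * m * (∑ l ∈ Finset.range k, (t l)^2) ^ (r/2) := by
  have hr0 : (0:ℝ) < r := by linarith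
  induction k with
  | zero =>
    constructor
    · simp only [Finset.range_zero, Finset.sum_empty, abs_zero,
        Real.zero_rpow hr0.ne']
      exact integrable_const 0
    · simp only [Finset.range_zero, Finset.sum_empty, abs_zero,
        Real.zero_rpow hr0.ne', Real.zero_rpow (ne_of_gt (by linarith : (0:ℝ) < r/2)), mul_zero]
      rw [integral_const]
      simp
  | succ k ih =>
    set S : Ω → ℝ := fun ω => ∑ l ∈ Finset.range k, t l * X l ω with hS
    have hSm : Measurable S := by
      apply Finset.measurable_sum
      exact fun l _ => (hXm l).const_mul _
    have hindepSX : IndepFun S (X k) ℙ := by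
      have h := hindep.indepFun_finset (Finset.range k) {k}
        (by simp [Finset.disjoint_singleton_right]) hXm
      have hφ : Measurable (fun v : ({x // x ∈ Finset.range k} → ℝ) =>
          ∑ i : {x // x ∈ Finset.range k}, t i.1 * v i) := by
        apply Finset.measurable_sum
        exact fun i _ => (measurable_pi_apply i).const_mul _
      have hψ : Measurable (fun v : ({x // x ∈ ({k} : Finset ℕ)} → ℝ) =>
          v ⟨k, Finset.mem_singleton_self k⟩) := measurable_pi_apply _
      have h2 := h.comp hφ hψ
      have he1 : (fun v : ({x // x ∈ Finset.range k} → ℝ) =>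
          ∑ i : {x // x ∈ Finset.range k}, t i.1 * v i) ∘ (fun a (i : {x // x ∈ Finset.range k}) => X i a) = S := by
        funext ω
        simp only [Function.comp_apply, hS]
        rw [← Finset.sum_coe_sort (Finset.range k) (fun l => t l * X l ω)]
      have he2 : (fun v : ({x // x ∈ ({k} : Finset ℕ)} → ℝ) => v ⟨k, Finset.mem_singleton_self k⟩)
          ∘ (fun a (i : {x // x ∈ ({k} : Finset ℕ)}) => X i a) = X k := by
        funext ω; simp
      rwa [he1, he2] at h2
    have hstep := step_lemma hr hSm (hXm k) hindepSX ih.1 (hmean k) (hvar k) (hXint k) (t k)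
    have hsum : ∀ ω, ∑ l ∈ Finset.range (k+1), t l * X l ω = S ω + t k * X k ω := by
      intro ω
      rw [Finset.sum_range_succ]
    constructor
    · have := hstep.1
      refine this.congr ?_
      filter_upwards with ω
      rw [hsum ω]
    · have heq : ∫ ω, |∑ l ∈ Finset.range (k+1), t l * X l ω| ^ r ∂ℙ
          = ∫ ω, |S ω + t k * X k ω| ^ r ∂ℙ := by
        congr 1; funext ω; rw [hsum ω]
      rw [heq]
      -- Jensen for the (r-2) moment
      set a : ℝ := ∫ ω, |S ω| ^ r ∂ℙ with ha
      have ha0 : 0 ≤ a := integral_nonneg (fun ω => Real.rpow_nonneg (abs_nonneg _) r)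
      have hjen : ∫ ω, |S ω| ^ (r-2) ∂ℙ ≤ a ^ ((r-2)/r) := by
        have hpt : ∀ ω, |S ω| ^ (r-2) = (|S ω| ^ r) ^ ((r-2)/r) := by
          intro ω
          rw [← Real.rpow_mul (abs_nonneg (S ω))]
          congr 1
          field_simp
        have h1 : ∫ ω, |S ω| ^ (r-2) ∂ℙ = ∫ ω, (|S ω| ^ r) ^ ((r-2)/r) ∂ℙ := by
          congr 1; funext ω; exact hpt ω
        rw [h1]
        exact integral_rpow_le (div_nonneg (by linarith) hr0.le)
          (by rw [div_le_one hr0]; linarith)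
          (meas_rpow hSm.abs hr0.le) (fun ω => Real.rpow_nonneg (abs_nonneg _) r) ih.1
      have hXkm : ∫ ω, |X k ω| ^ r ∂ℙ ≤ m := hmle k
      have hc1 : (1:ℝ) ≤ cMZ r := cMZ_ge_one hr
      have hbound := hstep.2
      have hchain : ∫ ω, |S ω + t k * X k ω| ^ r ∂ℙ ≤
          a + cMZ r * ((t k)^2 * a ^ ((r-2)/r) + |t k| ^ r * m) := by
        have hs2 : (t k)^2 * ∫ ω, |S ω| ^ (r-2) ∂ℙ ≤ (t k)^2 * a ^ ((r-2)/r) :=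
          mul_le_mul_of_nonneg_left hjen (sq_nonneg _)
        have hs3 : |t k| ^ r * ∫ ω, |X k ω| ^ r ∂ℙ ≤ |t k| ^ r * m :=
          mul_le_mul_of_nonneg_left hXkm (Real.rpow_nonneg (abs_nonneg _) r)
        have := hbound
        nlinarith [this, hs2, hs3]
      have harith := mz_arith hr hc1 hm1
        (Finset.sum_nonneg (fun l _ => sq_nonneg (t l))) ha0 (t k) ih.2
      rw [Finset.sum_range_succ]
      exact hchain.trans harith


/-- Precomposition of an independent family with an injective map. -/
lemma iIndepFun_precomp {Ω ι ι' : Type*} [MeasurableSpace Ω] {μ : Measure Ω}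
    {f : ι → Ω → ℝ} (h : iIndepFun f μ)
    {g : ι' → ι} (hg : Function.Injective g) :
    iIndepFun (fun i => f (g i)) μ := by
  classical
  rw [iIndepFun_iff_measure_inter_preimage_eq_mul] at h ⊢
  intro S sets hsets
  set sets' : ι → Set ℝ := fun j =>
    if hj : ∃ i, i ∈ S ∧ g i = j then sets hj.choose else Set.univ with hsets'
  have key : ∀ i ∈ S, sets' (g i) = sets i := by
    intro i hi
    have hj : ∃ i', i' ∈ S ∧ g i' = g i := ⟨i, hi, rfl⟩
    have hch := hj.choose_spec
    have : hj.choose = i := hg hch.2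
    simp only [hsets', dif_pos hj, this]
  have hmeas' : ∀ j, j ∈ S.image g → MeasurableSet (sets' j) := by
    intro j hj
    obtain ⟨i, hi, rfl⟩ := Finset.mem_image.mp hj
    rw [key i hi]
    exact hsets i hi
  have happ := h (S.image g) hmeas'
  have hset : (⋂ j ∈ S.image g, f j ⁻¹' sets' j) = ⋂ i ∈ S, f (g i) ⁻¹' sets i := by
    ext ω
    simp only [Set.mem_iInter, Finset.mem_image]
    constructor
    · intro H i hi
      have := H (g i) ⟨i, hi, rfl⟩
      rwa [key i hi] at this
    · rintro H j ⟨i, hi, rfl⟩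
      rw [key i hi]
      exact H i hi
  have hprod : ∏ j ∈ S.image g, μ (f j ⁻¹' sets' j) = ∏ i ∈ S, μ (f (g i) ⁻¹' sets i) := by
    rw [Finset.prod_image (fun i _ j _ hij => hg hij)]
    exact Finset.prod_congr rfl (fun i hi => by rw [key i hi])
  rw [hset, hprod] at happ
  exact happ

end Psec

lemma rpow_sq_half {t r : ℝ} : (t^2) ^ (r/2) = |t| ^ r := by
  have h1 : t^2 = |t| ^ (2:ℝ) := by rw [Real.rpow_two, sq_abs]
  rw [h1, ← Real.rpow_mul (abs_nonneg t)]
  congr 1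
  ring


section Psec2
variable {Ω : Type} [MeasureSpace Ω] [IsProbabilityMeasure (ℙ : Measure Ω)]

lemma mz_rand {r : ℝ} (hr : 2 ≤ r) {k : ℕ} {T X : ℕ → Ω → ℝ}
    (hTm : ∀ l, Measurable (T l)) (hXm : ∀ l, Measurable (X l))
    (hXindep : iIndepFun X ℙ)
    (hmean : ∀ l, ∫ ω, X l ω ∂ℙ = 0) (hvar : ∀ l, ∫ ω, (X l ω)^2 ∂ℙ = 1)
    {m : ℝ} (hXint : ∀ l, Integrable (fun ω => |X l ω| ^ r) ℙ)
    (hmle : ∀ l, ∫ ω, |X l ω| ^ r ∂ℙ ≤ m) (hm1 : 1 ≤ m)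
    (hTint : ∀ l, Integrable (fun ω => |T l ω| ^ r) ℙ)
    (hTX : IndepFun (fun ω (l : Fin k) => T l ω) (fun ω (l : Fin k) => X l ω) ℙ) :
    Integrable (fun ω => |∑ l ∈ Finset.range k, T l ω * X l ω| ^ r) ℙ ∧
    Integrable (fun ω => (∑ l ∈ Finset.range k, (T l ω)^2) ^ (r/2)) ℙ ∧
    ∫ ω, |∑ l ∈ Finset.range k, T l ω * X l ω| ^ r ∂ℙ ≤
      (2 * cMZ r) ^ (r/2) * m * ∫ ω, (∑ l ∈ Finset.range k, (T l ω)^2) ^ (r/2) ∂ℙ := by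
  have hr0 : (0:ℝ) < r := by linarith
  have hr2 : (1:ℝ) ≤ r/2 := by linarith
  -- pass to Fin k sums
  have hfin1 : ∀ ω, ∑ l ∈ Finset.range k, T l ω * X l ω
      = ∑ l : Fin k, T l.1 ω * X l.1 ω := fun ω => (Fin.sum_univ_eq_sum_range _ k).symm
  have hfin2 : ∀ ω, ∑ l ∈ Finset.range k, (T l ω)^2
      = ∑ l : Fin k, (T l.1 ω)^2 := fun ω => (Fin.sum_univ_eq_sum_range _ k).symm
  -- integrability of the main quantity
  have hTXl : ∀ l : Fin k, IndepFun (T l.1) (X l.1) ℙ := by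
    intro l
    have h := hTX.comp (φ := fun v : Fin k → ℝ => v l) (ψ := fun v : Fin k → ℝ => v l)
      (measurable_pi_apply (X := fun _ : Fin k => ℝ) l) (measurable_pi_apply (X := fun _ : Fin k => ℝ) l)
    exact h
  have hprodint : ∀ l : Fin k, Integrable (fun ω => |T l.1 ω| ^ r * |X l.1 ω| ^ r) ℙ := by
    intro l
    have hi : IndepFun (fun ω => |T l.1 ω| ^ r) (fun ω => |X l.1 ω| ^ r) ℙ :=
      (hTXl l).comp (meas_rpow measurable_abs hr0.le) (meas_rpow measurable_abs hr0.le)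
    have h := hi.integrable_mul (hTint l.1) (hXint l.1)
    exact h
  have hQm : Measurable (fun ω => |∑ l ∈ Finset.range k, T l ω * X l ω| ^ r) := by
    apply meas_rpow (Measurable.abs ?_) hr0.le
    exact Finset.measurable_sum _ (fun l _ => (hTm l).mul (hXm l))
  have hQint : Integrable (fun ω => |∑ l ∈ Finset.range k, T l ω * X l ω| ^ r) ℙ := by
    refine Integrable.mono ((integrable_finset_sum Finset.univ
      (fun l _ => hprodint l)).const_mul ((k:ℝ) ^ (r-1))) hQm.aestronglyMeasurable ?_
    filter_upwards with ω
    rw [Real.norm_eq_abs, Real.norm_eq_abs,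
      abs_of_nonneg (Real.rpow_nonneg (abs_nonneg _) _), hfin1 ω]
    have h1 : |∑ l : Fin k, T l.1 ω * X l.1 ω| ≤ ∑ l : Fin k, |T l.1 ω * X l.1 ω| :=
      Finset.abs_sum_le_sum_abs _ _
    have h2 : |∑ l : Fin k, T l.1 ω * X l.1 ω| ^ r
        ≤ (∑ l : Fin k, |T l.1 ω * X l.1 ω|) ^ r :=
      Real.rpow_le_rpow (abs_nonneg _) h1 hr0.le
    have h3 := sum_rpow_le Finset.univ (fun l : Fin k => |T l.1 ω * X l.1 ω|)
      (fun l _ => abs_nonneg _) (by linarith : (1:ℝ) ≤ r)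
    have h4 : ∀ l : Fin k, |T l.1 ω * X l.1 ω| ^ r = |T l.1 ω| ^ r * |X l.1 ω| ^ r := by
      intro l
      rw [abs_mul]
      exact Real.mul_rpow (abs_nonneg _) (abs_nonneg _)
    rw [Finset.card_univ, Fintype.card_fin] at h3
    calc |∑ l : Fin k, T l.1 ω * X l.1 ω| ^ r
        ≤ ((k:ℝ)) ^ (r-1) * ∑ l : Fin k, |T l.1 ω * X l.1 ω| ^ r := h2.trans h3
    _ = ((k:ℝ)) ^ (r-1) * ∑ l : Fin k, |T l.1 ω| ^ r * |X l.1 ω| ^ r := by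
        congr 1
        exact Finset.sum_congr rfl (fun l _ => h4 l)
    _ ≤ |((k:ℝ)) ^ (r-1) * ∑ l : Fin k, |T l.1 ω| ^ r * |X l.1 ω| ^ r| := le_abs_self _
  -- integrability of the sum of squares power
  have hRm : Measurable (fun ω => (∑ l ∈ Finset.range k, (T l ω)^2) ^ (r/2)) := by
    apply meas_rpow ?_ (by linarith : (0:ℝ) ≤ r/2)
    exact Finset.measurable_sum _ (fun l _ => (hTm l).pow_const 2)
  have hRint : Integrable (fun ω => (∑ l ∈ Finset.range k, (T l ω)^2) ^ (r/2)) ℙ := by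
    refine Integrable.mono ((integrable_finset_sum (Finset.range k)
      (fun l _ => hTint l)).const_mul ((k:ℝ) ^ (r/2-1))) hRm.aestronglyMeasurable ?_
    filter_upwards with ω
    rw [Real.norm_eq_abs, Real.norm_eq_abs,
      abs_of_nonneg (Real.rpow_nonneg (Finset.sum_nonneg (fun l _ => sq_nonneg _)) _)]
    have h3 := sum_rpow_le (Finset.range k) (fun l => (T l ω)^2)
      (fun l _ => sq_nonneg _) hr2
    rw [Finset.card_range] at h3
    have h4 : ∀ l, ((T l ω)^2) ^ (r/2) = |T l ω| ^ r := fun l => rpow_sq_half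
    calc (∑ l ∈ Finset.range k, (T l ω)^2) ^ (r/2)
        ≤ ((k:ℝ)) ^ (r/2-1) * ∑ l ∈ Finset.range k, ((T l ω)^2) ^ (r/2) := h3
    _ = ((k:ℝ)) ^ (r/2-1) * ∑ l ∈ Finset.range k, |T l ω| ^ r := by
        congr 1
        exact Finset.sum_congr rfl (fun l _ => h4 l)
    _ ≤ |((k:ℝ)) ^ (r/2-1) * ∑ l ∈ Finset.range k, |T l ω| ^ r| := le_abs_self _
  refine ⟨hQint, hRint, ?_⟩
  -- Fubini setup
  set Tv : Ω → (Fin k → ℝ) := fun ω l => T l.1 ω with hTv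
  set Xv : Ω → (Fin k → ℝ) := fun ω l => X l.1 ω with hXv
  have hTvm : Measurable Tv := measurable_pi_lambda _ (fun l => hTm l.1)
  have hXvm : Measurable Xv := measurable_pi_lambda _ (fun l => hXm l.1)
  set F : (Fin k → ℝ) × (Fin k → ℝ) → ℝ := fun uv => |∑ l : Fin k, uv.1 l * uv.2 l| ^ r
    with hF
  have hFm : Measurable F := by
    apply meas_rpow (Measurable.abs ?_) hr0.le
    apply Finset.measurable_sum
    intro l _
    exact ((measurable_pi_apply l).comp measurable_fst).mul
      ((measurable_pi_apply l).comp measurable_snd)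
  have hpairm : Measurable (fun ω => (Tv ω, Xv ω)) := hTvm.prodMk hXvm
  have hmap : Measure.map (fun ω => (Tv ω, Xv ω)) ℙ
      = (Measure.map Tv ℙ).prod (Measure.map Xv ℙ) :=
    (indepFun_iff_map_prod_eq_prod_map_map hTvm.aemeasurable hXvm.aemeasurable).mp hTX
  haveI : IsProbabilityMeasure (Measure.map Tv ℙ) := Measure.isProbabilityMeasure_map hTvm.aemeasurable
  haveI : IsProbabilityMeasure (Measure.map Xv ℙ) := Measure.isProbabilityMeasure_map hXvm.aemeasurable
  have hQeq : ∫ ω, |∑ l ∈ Finset.range k, T l ω * X l ω| ^ r ∂ℙ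
      = ∫ x, F x ∂((Measure.map Tv ℙ).prod (Measure.map Xv ℙ)) := by
    rw [← hmap, integral_map hpairm.aemeasurable hFm.aestronglyMeasurable]
    congr 1
    funext ω
    rw [hfin1 ω]
  have hFint : Integrable F ((Measure.map Tv ℙ).prod (Measure.map Xv ℙ)) := by
    rw [← hmap]
    rw [integrable_map_measure hFm.aestronglyMeasurable hpairm.aemeasurable]
    refine hQint.congr ?_
    filter_upwards with ω
    simp only [Function.comp_apply, hF, hTv, hXv]
    rw [hfin1 ω]
  rw [hQeq, integral_prod F hFint]
  -- the inner integral bound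
  have hinner : ∀ u : Fin k → ℝ, ∫ v, F (u, v) ∂(Measure.map Xv ℙ)
      ≤ (2 * cMZ r) ^ (r/2) * m * (∑ l : Fin k, (u l)^2) ^ (r/2) := by
    intro u
    classical
    set t : ℕ → ℝ := fun l => if h : l < k then u ⟨l, h⟩ else 0 with ht
    have hmz := mz_sum hr hXm hXindep hmean hvar hXint hmle hm1 t k
    have hs1 : ∀ ω, ∑ l ∈ Finset.range k, t l * X l ω = ∑ l : Fin k, u l * X l.1 ω := by
      intro ω
      rw [← Fin.sum_univ_eq_sum_range (fun l => t l * X l ω) k]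
      refine Finset.sum_congr rfl (fun l _ => ?_)
      simp only [ht, l.2, dif_pos]
    have hs2 : ∑ l ∈ Finset.range k, (t l)^2 = ∑ l : Fin k, (u l)^2 := by
      rw [← Fin.sum_univ_eq_sum_range (fun l => (t l)^2) k]
      refine Finset.sum_congr rfl (fun l _ => ?_)
      simp only [ht, l.2, dif_pos]
    have hFum : Measurable (fun v : Fin k → ℝ => F (u, v)) := by
      apply meas_rpow (Measurable.abs ?_) hr0.le
      exact Finset.measurable_sum _ (fun l _ => (measurable_pi_apply l).const_mul _)
    have him : ∫ v, F (u, v) ∂(Measure.map Xv ℙ)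
        = ∫ ω, |∑ l : Fin k, u l * X l.1 ω| ^ r ∂ℙ := by
      rw [integral_map hXvm.aemeasurable hFum.aestronglyMeasurable]
    rw [him]
    have h2 := hmz.2
    rw [hs2] at h2
    calc ∫ ω, |∑ l : Fin k, u l * X l.1 ω| ^ r ∂ℙ
        = ∫ ω, |∑ l ∈ Finset.range k, t l * X l ω| ^ r ∂ℙ := by
          congr 1; funext ω; rw [hs1 ω]
    _ ≤ (2 * cMZ r) ^ (r/2) * m * (∑ l : Fin k, (u l)^2) ^ (r/2) := h2
  -- outer integral
  have houter_int : Integrable (fun u => ∫ v, F (u, v) ∂(Measure.map Xv ℙ))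
      (Measure.map Tv ℙ) := hFint.integral_prod_left
  have hG_int : Integrable (fun u : Fin k → ℝ =>
      (2 * cMZ r) ^ (r/2) * m * (∑ l : Fin k, (u l)^2) ^ (r/2)) (Measure.map Tv ℙ) := by
    rw [integrable_map_measure ?_ hTvm.aemeasurable]
    · refine (hRint.const_mul ((2 * cMZ r) ^ (r/2) * m)).congr ?_
      filter_upwards with ω
      simp only [Function.comp_apply, hTv]
      rw [hfin2 ω]
    · refine ((meas_rpow (Finset.measurable_sum _
        (fun l _ => (measurable_pi_apply l).pow_const 2)) (by linarith : (0:ℝ) ≤ r/2)).const_mul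
          _).aestronglyMeasurable
  have hmono := integral_mono houter_int hG_int hinner
  refine hmono.trans ?_
  have : ∫ u, (2 * cMZ r) ^ (r/2) * m * (∑ l : Fin k, (u l)^2) ^ (r/2) ∂(Measure.map Tv ℙ)
      = (2 * cMZ r) ^ (r/2) * m * ∫ ω, (∑ l ∈ Finset.range k, (T l ω)^2) ^ (r/2) ∂ℙ := by
    rw [integral_map hTvm.aemeasurable (((meas_rpow (Finset.measurable_sum _
        (fun l _ => (measurable_pi_apply l).pow_const 2)) (by linarith : (0:ℝ) ≤ r/2)).const_mul
          _).aestronglyMeasurable), integral_const_mul]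
    congr 1
    congr 1
    funext ω
    rw [hfin2 ω]
  rw [this]


end Psec2

lemma matProd_zero (n : ℕ → ℕ) (A : ℕ → ℕ → ℕ → ℝ) : matProd n A 0 = A 0 := rfl

lemma matProd_succ (n : ℕ → ℕ) (A : ℕ → ℕ → ℕ → ℝ) (p i k : ℕ) :
    matProd n A (p+1) i k
      = ∑ j ∈ Finset.range (n (p + 1)), matProd n A p i j * A (p + 1) j k := rfl

lemma matProd_congr' (n : ℕ → ℕ) (A B : ℕ → ℕ → ℕ → ℝ) (p : ℕ) (i k : ℕ)
    (h : ∀ q a b, q ≤ p → (q = 0 → a = i) → (0 < q → a < n q) →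
      (q = p → b = k) → (q < p → b < n (q+1)) → A q a b = B q a b) :
    matProd n A p i k = matProd n B p i k := by
  induction p generalizing k with
  | zero => exact h 0 i k (le_refl 0) (fun _ => rfl) (by omega) (fun _ => rfl) (by omega)
  | succ p ih =>
    rw [matProd_succ, matProd_succ]
    refine Finset.sum_congr rfl (fun b hb => ?_)
    have hb' := Finset.mem_range.mp hb
    have h1 : matProd n A p i b = matProd n B p i b := by
      refine ih b (fun q a b' hq h0 hpos hqp' hlt' => ?_)
      refine h q a b' (by omega) h0 hpos (by omega) ?_
      intro hlt2
      rcases Nat.lt_or_ge q p with hc | hc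
      · exact hlt' hc
      · have hqe : q = p := by omega
        subst hqe
        rw [hqp' rfl]
        exact hb'
    have h2 : A (p+1) b k = B (p+1) b k :=
      h (p+1) b k (le_refl _) (by omega) (fun _ => hb') (fun _ => rfl) (by omega)
    rw [h1, h2]

lemma matProd_measurable {γ : Type*} [MeasurableSpace γ] (n : ℕ → ℕ)
    (F : ℕ → ℕ → ℕ → γ → ℝ) (hF : ∀ q a b, Measurable (F q a b)) (p i k : ℕ) :
    Measurable (fun v => matProd n (fun q a b => F q a b v) p i k) := by
  induction p generalizing k with
  | zero => exact hF 0 i k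
  | succ p ih =>
    have he : (fun v => matProd n (fun q a b => F q a b v) (p+1) i k)
        = fun v => ∑ j ∈ Finset.range (n (p+1)),
            matProd n (fun q a b => F q a b v) p i j * F (p+1) j k v := by
      funext v
      rw [matProd_succ]
    rw [he]
    exact Finset.measurable_sum _ (fun j _ => (ih j).mul (hF (p+1) j k))

lemma aux_bound (α : ℝ) (hα : 1 ≤ α) {Ω : Type} [MeasureSpace Ω]
    [IsProbabilityMeasure (ℙ : Measure Ω)] (n : ℕ → ℕ) (A : ℕ → ℕ → ℕ → Ω → ℝ)
    (hAm : ∀ q i j, Measurable (A q i j))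
    (hindep : iIndepFun (fun t : ℕ × ℕ × ℕ => A t.1 t.2.1 t.2.2) ℙ)
    (hident : ∀ q i j, IdentDistrib (A q i j) (A q 0 0) ℙ ℙ)
    (hmean : ∀ q, ∫ ω, A q 0 0 ω ∂ℙ = 0)
    (hvar : ∀ q, ∫ ω, (A q 0 0 ω) ^ 2 ∂ℙ = 1) :
    ∀ p' : ℕ, (∀ q, q ≤ p' → Integrable (fun ω => |A q 0 0 ω| ^ (2 * α)) ℙ) →
    ∀ j,
      Integrable (fun ω => |∑ i ∈ Finset.range (n 0),
          matProd n (fun q a b => A q a b ω) p' i j| ^ (2*α)) ℙ ∧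
      (∫ ω, |∑ i ∈ Finset.range (n 0),
          matProd n (fun q a b => A q a b ω) p' i j| ^ (2*α) ∂ℙ) ≤
        ((2 * cMZ (2*α)) ^ α) ^ (p'+1) *
          (∏ q ∈ Finset.range (p'+1), ∫ ω, |A q 0 0 ω| ^ (2*α) ∂ℙ) *
          (∏ q ∈ Finset.range (p'+1), (n q : ℝ)) ^ α := by
  have hr : (2:ℝ) ≤ 2*α := by linarith
  have hr0 : (0:ℝ) < 2*α := by linarith
  have hhalf : (2*α)/2 = α := by ring
  -- distributional facts for arbitrary entries
  have hmean' : ∀ q i j, ∫ ω, A q i j ω ∂ℙ = 0 := fun q i j =>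
    ((hident q i j).integral_eq).trans (hmean q)
  have hvar' : ∀ q i j, ∫ ω, (A q i j ω)^2 ∂ℙ = 1 := by
    intro q i j
    have h := ((hident q i j).comp (measurable_id.pow_const 2)).integral_eq
    exact h.trans (hvar q)
  have habs' : ∀ q i j, IdentDistrib (fun ω => |A q i j ω| ^ (2*α))
      (fun ω => |A q 0 0 ω| ^ (2*α)) ℙ ℙ := fun q i j =>
    (hident q i j).comp (meas_rpow measurable_abs hr0.le)
  intro p'
  induction p' with
  | zero =>
    intro hint j
    set m0 : ℝ := ∫ ω, |A 0 0 0 ω| ^ (2*α) ∂ℙ with hm0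
    have hm1 : 1 ≤ m0 := moment_ge_one hr (hAm 0 0 0) (hvar 0) (hint 0 le_rfl)
    have hXindep : iIndepFun (fun i => A 0 i j) ℙ :=
      iIndepFun_precomp hindep (g := fun i => ((0:ℕ), i, j))
        (fun a b hab => by simpa using hab)
    have hmz := mz_sum hr (X := fun i => A 0 i j) (fun i => hAm 0 i j) hXindep
      (fun i => hmean' 0 i j) (fun i => hvar' 0 i j) (m := m0)
      (fun i => ((habs' 0 i j).integrable_iff).mpr (hint 0 le_rfl))
      (fun i => le_of_eq ((habs' 0 i j).integral_eq)) hm1 (fun _ => 1) (n 0)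
    have hfe : (fun ω => |∑ i ∈ Finset.range (n 0), (1:ℝ) * A 0 i j ω| ^ (2*α))
        = fun ω => |∑ i ∈ Finset.range (n 0),
            matProd n (fun q a b => A q a b ω) 0 i j| ^ (2*α) := by
      funext ω
      simp [matProd_zero]
    constructor
    · rw [← hfe]; exact hmz.1
    · have h2 := hmz.2
      rw [hfe] at h2
      have hs : ∑ _l ∈ Finset.range (n 0), ((1:ℝ))^2 = (n 0 : ℝ) := by simp
      rw [hs, hhalf] at h2
      have hpr1 : (∏ q ∈ Finset.range (0+1), ∫ ω, |A q 0 0 ω| ^ (2*α) ∂ℙ) = m0 := by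
        rw [Finset.prod_range_one]
      have hpr2 : (∏ q ∈ Finset.range (0+1), (n q : ℝ)) = (n 0 : ℝ) := by
        rw [Finset.prod_range_one]
      rw [hpr1, hpr2, pow_one]
      exact h2
  | succ p' ih =>
    intro hint j
    have hint' : ∀ q, q ≤ p' → Integrable (fun ω => |A q 0 0 ω| ^ (2 * α)) ℙ :=
      fun q hq => hint q (by omega)
    have IH := ih hint'
    set k := n (p'+1) with hk
    set T : ℕ → Ω → ℝ := fun l ω => ∑ i ∈ Finset.range (n 0),
      matProd n (fun q a b => A q a b ω) p' i l with hT
    set X : ℕ → Ω → ℝ := fun l => A (p'+1) l j with hX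
    have hTm : ∀ l, Measurable (T l) := fun l =>
      Finset.measurable_sum _ (fun i _ =>
        matProd_measurable n (fun q a b => A q a b) hAm p' i l)
    have hXm : ∀ l, Measurable (X l) := fun l => hAm (p'+1) l j
    have hXindep : iIndepFun X ℙ :=
      iIndepFun_precomp hindep (g := fun l => ((p'+1 : ℕ), l, j))
        (fun a b hab => by simpa using hab)
    set m' : ℝ := ∫ ω, |A (p'+1) 0 0 ω| ^ (2*α) ∂ℙ with hm'
    have hm1 : 1 ≤ m' := moment_ge_one hr (hAm (p'+1) 0 0) (hvar (p'+1)) (hint (p'+1) le_rfl)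
    have hTint : ∀ l, Integrable (fun ω => |T l ω| ^ (2*α)) ℙ := fun l => (IH l).1
    set Bnd : ℝ := ((2 * cMZ (2*α)) ^ α) ^ (p'+1) *
      (∏ q ∈ Finset.range (p'+1), ∫ ω, |A q 0 0 ω| ^ (2*α) ∂ℙ) *
      (∏ q ∈ Finset.range (p'+1), (n q : ℝ)) ^ α with hBnd
    have hTbd : ∀ l, ∫ ω, |T l ω| ^ (2*α) ∂ℙ ≤ Bnd := fun l => (IH l).2
    -- vector independence
    have hTX : IndepFun (fun ω (l : Fin k) => T l ω) (fun ω (l : Fin k) => X l ω) ℙ := by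
      classical
      set M := Finset.sup (Finset.range (p'+2)) n with hM
      have hMle : ∀ q, q ≤ p'+1 → n q ≤ M :=
        fun q hq => Finset.le_sup (Finset.mem_range.mpr (by omega))
      set Sfin : Finset (ℕ × ℕ × ℕ) :=
        (Finset.range (p'+1)) ×ˢ ((Finset.range M) ×ˢ (Finset.range M)) with hSfin
      set Tfin : Finset (ℕ × ℕ × ℕ) :=
        ({p'+1} : Finset ℕ) ×ˢ ((Finset.range k) ×ˢ ({j} : Finset ℕ)) with hTfin
      have hdis : Disjoint Sfin Tfin := by
        rw [Finset.disjoint_left]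
        rintro ⟨q, a, b⟩ hx hy
        simp only [hSfin, hTfin, Finset.mem_product, Finset.mem_range,
          Finset.mem_singleton] at hx hy
        omega
      have hbase := hindep.indepFun_finset Sfin Tfin hdis (fun t => hAm t.1 t.2.1 t.2.2)
      set φ : ({x // x ∈ Sfin} → ℝ) → (Fin k → ℝ) := fun v l =>
        ∑ i ∈ Finset.range (n 0), matProd n
          (fun q a b => if h : (q,a,b) ∈ Sfin then v ⟨(q,a,b), h⟩ else 0) p' i l.1 with hφ
      set ψ : ({x // x ∈ Tfin} → ℝ) → (Fin k → ℝ) := fun v l =>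
        if h : ((p'+1 : ℕ), (l.1 : ℕ), j) ∈ Tfin then v ⟨((p'+1 : ℕ), (l.1 : ℕ), j), h⟩
        else 0 with hψ
      have hφm : Measurable φ := by
        apply measurable_pi_lambda
        intro l
        apply Finset.measurable_sum
        intro i _
        have hent : ∀ q a b, Measurable (fun v : {x // x ∈ Sfin} → ℝ =>
            if h : (q,a,b) ∈ Sfin then v ⟨(q,a,b), h⟩ else 0) := by
          intro q a b
          by_cases hmem : (q,a,b) ∈ Sfin
          · simp only [dif_pos hmem]
            exact measurable_pi_apply _
          · simp only [dif_neg hmem]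
            exact measurable_const
        exact matProd_measurable n
          (fun q a b (v : {x // x ∈ Sfin} → ℝ) => if h : (q,a,b) ∈ Sfin then v ⟨(q,a,b), h⟩ else 0) hent p' i l.1
      have hψm : Measurable ψ := by
        apply measurable_pi_lambda
        intro l
        simp only [hψ]
        by_cases hmem : ((p'+1:ℕ), (l.1:ℕ), j) ∈ Tfin
        · simp only [dif_pos hmem]; exact measurable_pi_apply _
        · simp only [dif_neg hmem]; exact measurable_const
      have hcomp := hbase.comp hφm hψm
      have he1 : φ ∘ (fun ω (x : {x // x ∈ Sfin}) =>
          (fun t : ℕ × ℕ × ℕ => A t.1 t.2.1 t.2.2) x.1 ω)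
          = fun ω (l : Fin k) => T l ω := by
        funext ω
        funext l
        simp only [Function.comp_apply, hφ, hT]
        refine Finset.sum_congr rfl (fun i hi => ?_)
        refine matProd_congr' n _ _ p' i l.1 (fun q a b hq h0 hpos hqp hlt => ?_)
        have hmem : (q,a,b) ∈ Sfin := by
          simp only [hSfin, Finset.mem_product, Finset.mem_range]
          refine ⟨by omega, ?_, ?_⟩
          · rcases Nat.eq_zero_or_pos q with hz | hz
            · have hai : a = i := h0 hz
              have hi2 : i < n 0 := Finset.mem_range.mp hi
              have hn0 : n 0 ≤ M := hMle 0 (by omega)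
              omega
            · have h1 := hpos hz
              have h2 := hMle q (by omega)
              omega
          · rcases Nat.lt_or_ge q p' with hc | hc
            · have h1 := hlt hc
              have h2 := hMle (q+1) (by omega)
              omega
            · have hqe : q = p' := by omega
              have hbl : b = l.1 := hqp hqe
              have h1 : (l.1 : ℕ) < k := l.2
              have h2 := hMle (p'+1) le_rfl
              omega
        rw [dif_pos hmem]
      have he2 : ψ ∘ (fun ω (x : {x // x ∈ Tfin}) =>
          (fun t : ℕ × ℕ × ℕ => A t.1 t.2.1 t.2.2) x.1 ω)
          = fun ω (l : Fin k) => X l ω := by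
        funext ω
        funext l
        have hmem : ((p'+1:ℕ), (l.1:ℕ), j) ∈ Tfin := by
          rw [hTfin]
          refine Finset.mem_product.mpr ⟨Finset.mem_singleton_self _,
            Finset.mem_product.mpr ⟨Finset.mem_range.mpr l.2, Finset.mem_singleton_self _⟩⟩
        simp only [Function.comp_apply, hψ, hX, dif_pos hmem]
      rwa [he1, he2] at hcomp
    have hmzr := mz_rand hr hTm hXm hXindep (fun l => hmean' (p'+1) l j)
      (fun l => hvar' (p'+1) l j) (m := m')
      (fun l => ((habs' (p'+1) l j).integrable_iff).mpr (hint (p'+1) le_rfl))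
      (fun l => le_of_eq ((habs' (p'+1) l j).integral_eq)) hm1 hTint hTX
    have hswap : ∀ ω, ∑ i ∈ Finset.range (n 0),
        matProd n (fun q a b => A q a b ω) (p'+1) i j
        = ∑ l ∈ Finset.range k, T l ω * X l ω := by
      intro ω
      simp only [matProd_succ]
      rw [Finset.sum_comm]
      exact Finset.sum_congr rfl (fun l _ => (Finset.sum_mul _ _ _).symm)
    constructor
    · refine hmzr.1.congr ?_
      filter_upwards with ω
      rw [hswap ω]
    · have hEq : ∫ ω, |∑ i ∈ Finset.range (n 0),
          matProd n (fun q a b => A q a b ω) (p'+1) i j| ^ (2*α) ∂ℙ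
          = ∫ ω, |∑ l ∈ Finset.range k, T l ω * X l ω| ^ (2*α) ∂ℙ := by
        congr 1
        funext ω
        rw [hswap ω]
      rw [hEq]
      -- RHS nonnegativity pieces
      have hc1 : (1:ℝ) ≤ cMZ (2*α) := cMZ_ge_one hr
      have hK0 : (0:ℝ) ≤ (2 * cMZ (2*α)) ^ α := Real.rpow_nonneg (by linarith) α
      have hprodm0 : (0:ℝ) ≤ ∏ q ∈ Finset.range (p'+1), ∫ ω, |A q 0 0 ω| ^ (2*α) ∂ℙ :=
        Finset.prod_nonneg (fun q _ =>
          integral_nonneg (fun ω => Real.rpow_nonneg (abs_nonneg _) _))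
      have hBnd0 : 0 ≤ Bnd := by
        rw [hBnd]
        apply mul_nonneg (mul_nonneg (pow_nonneg hK0 _) hprodm0)
        exact Real.rpow_nonneg (Finset.prod_nonneg (fun q _ => Nat.cast_nonneg _)) α
      rcases Nat.eq_zero_or_pos k with hk0 | hkpos
      · have hzero : ∫ ω, |∑ l ∈ Finset.range k, T l ω * X l ω| ^ (2*α) ∂ℙ = 0 := by
          have : (fun ω => |∑ l ∈ Finset.range k, T l ω * X l ω| ^ (2*α))
              = fun _ => (0:ℝ) := by
            funext ω
            rw [hk0]
            simp [Real.zero_rpow hr0.ne']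
          rw [this, integral_const]
          simp
        rw [hzero]
        apply mul_nonneg (mul_nonneg (pow_nonneg hK0 _) ?_) ?_
        · exact Finset.prod_nonneg (fun q _ =>
            integral_nonneg (fun ω => Real.rpow_nonneg (abs_nonneg _) _))
        · exact Real.rpow_nonneg (Finset.prod_nonneg (fun q _ => Nat.cast_nonneg _)) α
      · -- main chain
        have hkR : (0:ℝ) < (k:ℝ) := by exact_mod_cast hkpos
        have hptsum : ∀ ω, (∑ l ∈ Finset.range k, (T l ω)^2) ^ ((2*α)/2)
            ≤ (k:ℝ) ^ ((2*α)/2 - 1) * ∑ l ∈ Finset.range k, |T l ω| ^ (2*α) := by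
          intro ω
          have h3 := sum_rpow_le (Finset.range k) (fun l => (T l ω)^2)
            (fun l _ => sq_nonneg _) (by linarith : (1:ℝ) ≤ (2*α)/2)
          rw [Finset.card_range] at h3
          refine h3.trans ?_
          apply mul_le_mul_of_nonneg_left ?_ (Real.rpow_nonneg (Nat.cast_nonneg k) _)
          exact le_of_eq (Finset.sum_congr rfl (fun l _ => rpow_sq_half))
        have hSint2 := integral_mono hmzr.2.1
          ((integrable_finset_sum (Finset.range k) (fun l _ => hTint l)).const_mul
            ((k:ℝ) ^ ((2*α)/2 - 1))) hptsum
        rw [integral_const_mul,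
          integral_finset_sum (Finset.range k) (fun l _ => hTint l)] at hSint2
        have hsum_le : ∑ l ∈ Finset.range k, ∫ ω, |T l ω| ^ (2*α) ∂ℙ ≤ (k:ℝ) * Bnd := by
          calc ∑ l ∈ Finset.range k, ∫ ω, |T l ω| ^ (2*α) ∂ℙ
              ≤ ∑ _l ∈ Finset.range k, Bnd := Finset.sum_le_sum (fun l _ => hTbd l)
          _ = (k:ℝ) * Bnd := by
              rw [Finset.sum_const, Finset.card_range, nsmul_eq_mul]
        have hkpow : (k:ℝ) ^ ((2*α)/2 - 1) * ((k:ℝ) * Bnd) = (k:ℝ) ^ α * Bnd := by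
          rw [hhalf]
          have h1 : (k:ℝ) ^ (α - 1) * (k:ℝ) = (k:ℝ) ^ ((α-1)+1) := by
            rw [Real.rpow_add_one hkR.ne' (α-1)]
          have h2 : (α - 1) + 1 = α := by ring
          rw [← mul_assoc, h1, h2]
        have hchain : ∫ ω, (∑ l ∈ Finset.range k, (T l ω)^2) ^ ((2*α)/2) ∂ℙ
            ≤ (k:ℝ) ^ α * Bnd := by
          rw [← hkpow]
          refine hSint2.trans ?_
          exact mul_le_mul_of_nonneg_left hsum_le (Real.rpow_nonneg (Nat.cast_nonneg k) _)
        have hfinal := hmzr.2.2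
        rw [hhalf] at hfinal hchain
        have hbig : ∫ ω, |∑ l ∈ Finset.range k, T l ω * X l ω| ^ (2*α) ∂ℙ
            ≤ (2 * cMZ (2*α)) ^ α * m' * ((k:ℝ) ^ α * Bnd) := by
          refine hfinal.trans ?_
          exact mul_le_mul_of_nonneg_left hchain (by nlinarith)
        refine hbig.trans (le_of_eq ?_)
        have e1 : (∏ q ∈ Finset.range (p'+1+1), ∫ ω, |A q 0 0 ω| ^ (2*α) ∂ℙ)
            = (∏ q ∈ Finset.range (p'+1), ∫ ω, |A q 0 0 ω| ^ (2*α) ∂ℙ) * m' := by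
          rw [Finset.prod_range_succ, ← hm']
        have e2 : (∏ q ∈ Finset.range (p'+1+1), (n q : ℝ)) ^ α
            = (∏ q ∈ Finset.range (p'+1), (n q : ℝ)) ^ α * (k:ℝ) ^ α := by
          rw [Finset.prod_range_succ,
            Real.mul_rpow (Finset.prod_nonneg (fun q _ => Nat.cast_nonneg _))
              (Nat.cast_nonneg _), ← hk]
        rw [e1, e2, pow_succ, hBnd]
        ring

/-- moment estimate for column sums: for `α ≥ 1` and `p ≥ 1` there is a constant
`C` (depending only on `α` and `p`) such that for a product `P = A⁽¹⁾ ⋯ A⁽ᵖ⁾` of independent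
random matrices with i.i.d. centered unit-variance entries with finite moment of order `2α`,
for every column index `j < n_p`,
`E[|∑_{i<n₀} P_{ij}|^{2α}] ≤ C E[|A⁽¹⁾₁₁|^{2α}] ⋯ E[|A⁽ᵖ⁾₁₁|^{2α}] (n₀ n₁ ⋯ n_{p−1})^α`. -/
theorem moment_estimate_column_sums
    (α : ℝ) (hα : 1 ≤ α) (p : ℕ) (hp : 1 ≤ p) :
    ∃ C : ℝ, ∀ (Ω : Type) [MeasureSpace Ω] [IsProbabilityMeasure (ℙ : Measure Ω)],
    ∀ n : ℕ → ℕ, ∀ A : ℕ → ℕ → ℕ → Ω → ℝ,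
      (∀ q i j, Measurable (A q i j)) →
      iIndepFun (fun t : ℕ × ℕ × ℕ => A t.1 t.2.1 t.2.2) ℙ →
      (∀ q i j, IdentDistrib (A q i j) (A q 0 0) ℙ ℙ) →
      (∀ q, ∫ ω, A q 0 0 ω ∂ℙ = 0) →
      (∀ q, ∫ ω, (A q 0 0 ω) ^ 2 ∂ℙ = 1) →
      (∀ q < p, Integrable (fun ω => |A q 0 0 ω| ^ (2 * α)) ℙ) →
      ∀ j < n p,
        (∫ ω, |∑ i ∈ Finset.range (n 0),
            matProd n (fun q i j => A q i j ω) (p - 1) i j| ^ (2 * α) ∂ℙ) ≤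
          C * (∏ q ∈ Finset.range p, ∫ ω, |A q 0 0 ω| ^ (2 * α) ∂ℙ) *
            (∏ q ∈ Finset.range p, (n q : ℝ)) ^ α := by
  refine ⟨((2 * cMZ (2*α)) ^ α) ^ p, ?_⟩
  intro Ω _ _ n A hAm hindep hident hmean hvar hint j hj
  have hres := aux_bound α hα n A hAm hindep hident hmean hvar (p-1)
    (fun q hq => hint q (by omega)) j
  have hp1 : p - 1 + 1 = p := Nat.succ_pred_eq_of_pos hp
  rw [hp1] at hres
  exact hres.2
end
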